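/- arXiv:0808.0090 — 2 statements merged into one kernel-verified Lean document; each statement's English description precedes it below -/
import Mathlib

section
/- Let X̃ ⊆ P^{r+1} be a smooth rational normal scroll of codimension at least 2 with scroll map φ : X̃ → P¹, and let p ∈ Sec(X̃) \ X̃ be a closed point with dim Sec_p(X̃) ≥ 2. Then the restriction φ|_{Σ_p(X̃)} : Σ_p(X̃) → P¹ is surjective; that is, Σ_p(X̃) is not contained in any single ruling L(x). -/
/-!
Common framework: projective space over an algebraically closed field, linear
subspaces, Zariski closure, tangent spaces, secant cones and secant loci,
rational normal scrolls (possibly cones) and their distinguished subvarieties.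
-/

open Projectivization MvPolynomial

noncomputable section

namespace SecantLoci

/-- Projective `N`-space over `K`, with homogeneous coordinates indexed by `Fin (N+1)`. -/
abbrev PS (K : Type*) [Field K] (N : ℕ) := Projectivization K (Fin (N + 1) → K)

variable {K : Type*} [Field K] {N : ℕ}

/-- The affine cone over a set of projective points (it contains `0`). -/
def cone (S : Set (PS K N)) : Set (Fin (N + 1) → K) :=
  { v | ∀ hv : v ≠ 0, Projectivization.mk K v hv ∈ S }

/-- The set of projective points lying in the projectivization of a linear subspace `W`. -/
def linSet (W : Submodule K (Fin (N + 1) → K)) : Set (PS K N) :=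
  { x | x.submodule ≤ W }

/-- `S` is a projective linear subspace of (projective) dimension `d`. -/
def IsLinearOfDim (S : Set (PS K N)) (d : ℕ) : Prop :=
  ∃ W : Submodule K (Fin (N + 1) → K), Module.finrank K W = d + 1 ∧ S = linSet W

/-- The projective linear span of a set of projective points. -/
def projSpan (S : Set (PS K N)) : Set (PS K N) :=
  linSet (⨆ x ∈ S, x.submodule)

/-- The line through two points (the span of the pair). -/
def lineThrough (p q : PS K N) : Set (PS K N) := projSpan {p, q}

def IsLine (S : Set (PS K N)) : Prop := IsLinearOfDim S 1

def IsPlane (S : Set (PS K N)) : Prop := IsLinearOfDim S 2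

/-- The polynomials vanishing on the affine cone over `S`. -/
def vanishing (S : Set (PS K N)) : Set (MvPolynomial (Fin (N + 1)) K) :=
  { f | ∀ v ∈ cone S, eval v f = 0 }

/-- The Zariski closure of a set of projective points. -/
def zcl (S : Set (PS K N)) : Set (PS K N) :=
  { x | ∀ f ∈ vanishing S, eval x.rep f = 0 }

def IsZClosed (S : Set (PS K N)) : Prop := zcl S = S

/-- Irreducibility with respect to Zariski closed sets. -/
def IsIrred (S : Set (PS K N)) : Prop :=
  S.Nonempty ∧ ∀ A B : Set (PS K N),
    IsZClosed A → IsZClosed B → S ⊆ A ∪ B → S ⊆ A ∨ S ⊆ B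

/-- `dimGE S k` : the (Zariski) dimension of `S` is at least `k`, i.e. there is a
strictly increasing chain of `k+1` nonempty irreducible closed subsets of the closure of `S`. -/
def dimGE (S : Set (PS K N)) (k : ℕ) : Prop :=
  ∃ c : Fin (k + 1) → Set (PS K N), StrictMono c ∧
    (∀ i, IsZClosed (c i) ∧ IsIrred (c i)) ∧ c (Fin.last k) ⊆ zcl S

/-- The embedded join of two sets: the Zariski closure of the union of all lines
joining a point of `Y` to a point of `Z` (together with `Y` and `Z` themselves). -/
def join (Y Z : Set (PS K N)) : Set (PS K N) :=
  zcl (Y ∪ Z ∪ ⋃ y ∈ Y, ⋃ z ∈ Z, lineThrough y z)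

/-- The (projective) Zariski tangent space of `X` at `q`: the projectivization of the
kernel of the linear parts at `q` of all polynomials vanishing on the cone over `X`. -/
def tangentSpace (X : Set (PS K N)) (q : PS K N) : Set (PS K N) :=
  { x | ∀ f ∈ vanishing X, ∑ i, x.rep i * eval q.rep (pderiv i f) = 0 }

/-- A line `L` is a secant line of `X` when it meets `X` in a scheme of length at least 2:
equivalently, it meets `X` in two distinct points, or it is tangent to `X` at some point. -/
def IsSecantLine (X L : Set (PS K N)) : Prop :=
  IsLine L ∧
    ((∃ x ∈ X ∩ L, ∃ y ∈ X ∩ L, x ≠ y) ∨ ∃ q ∈ X ∩ L, L ⊆ tangentSpace X q)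

/-- The secant cone `Sec_p(X)`: the union of all secant lines of `X` through `p`
(just `{p}` if there is no such line). -/
def secCone (X : Set (PS K N)) (p : PS K N) : Set (PS K N) :=
  {p} ∪ ⋃ L ∈ { L | IsSecantLine X L ∧ p ∈ L }, L

/-- The secant locus `Σ_p(X)` (as a set: the support of the scheme-theoretic
intersection of `X` with the secant cone). -/
def secLocus (X : Set (PS K N)) (p : PS K N) : Set (PS K N) :=
  X ∩ secCone X p

/-- The secant variety: the Zariski closure of the union of all chords of `X`. -/
def secVariety (X : Set (PS K N)) : Set (PS K N) :=
  zcl (⋃ x ∈ X, ⋃ y ∈ X, ⋃ _ : x ≠ y, lineThrough x y)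

/-- The tangent variety: the Zariski closure of the union of all tangent spaces of `X`. -/
def tanVariety (X : Set (PS K N)) : Set (PS K N) :=
  zcl (⋃ q ∈ X, tangentSpace X q)

/-- `S` is a smooth plane conic: the image of `ℙ¹` under a degree-2 Veronese map into
the plane spanned by three linearly independent vectors. -/
def IsSmoothConic (S : Set (PS K N)) : Prop :=
  ∃ v : Fin 3 → (Fin (N + 1) → K), LinearIndependent K v ∧
    S = { x | ∃ s t : K, (s, t) ≠ (0, 0) ∧
      x.submodule = Submodule.span K {s ^ 2 • v 0 + (s * t) • v 1 + t ^ 2 • v 2} }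

/-- `S` is a smooth quadric surface (in the 3-space spanned by four independent vectors):
the image of `ℙ¹ × ℙ¹` under a Segre map. -/
def IsSmoothQuadricSurface (S : Set (PS K N)) : Prop :=
  ∃ v : Fin 2 → Fin 2 → (Fin (N + 1) → K),
    LinearIndependent K (fun q : Fin 2 × Fin 2 => v q.1 q.2) ∧
    S = { x | ∃ b c : Fin 2 → K, b ≠ 0 ∧ c ≠ 0 ∧
      x.submodule = Submodule.span K {∑ i, ∑ j, (b i * c j) • v i j} }

/-- The data of a smooth rational normal scroll of type `(a 0, …, a (n-1))` in `ℙ^N`: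
a family of linearly independent vectors `v i j`, `0 ≤ j ≤ a i`, giving the rational
normal curve directrices of the scroll. -/
structure ScrollData (K : Type*) [Field K] (N n : ℕ) (a : Fin n → ℕ) where
  v : (i : Fin n) → Fin (a i + 1) → (Fin (N + 1) → K)
  indep : LinearIndependent K fun q : (i : Fin n) × Fin (a i + 1) => v q.1 q.2

namespace ScrollData

variable {n : ℕ} {a : Fin n → ℕ}

/-- The point of the `i`-th directrix curve over the parameter `(s : t) ∈ ℙ¹`. -/
def w (D : ScrollData K N n a) (i : Fin n) (s t : K) : Fin (N + 1) → K :=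
  ∑ j : Fin (a i + 1), (s ^ (a i - (j : ℕ)) * t ^ (j : ℕ)) • D.v i j

/-- The ruling of the scroll over the parameter `(s : t) ∈ ℙ¹`:
the linear span of the points of the directrix curves over `(s : t)`. -/
def ruling (D : ScrollData K N n a) (s t : K) : Set (PS K N) :=
  linSet (Submodule.span K (Set.range fun i => D.w i s t))

/-- The scroll itself: the union of its rulings. -/
def carrier (D : ScrollData K N n a) : Set (PS K N) :=
  ⋃ (s : K) (t : K) (_ : (s, t) ≠ (0, 0)), D.ruling s t

/-- A line section of the scroll: a line contained in the scroll meeting each ruling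
in exactly one point (a section of the scroll map `φ`). -/
def IsLineSection (D : ScrollData K N n a) (L : Set (PS K N)) : Prop :=
  IsLine L ∧ L ⊆ D.carrier ∧
    ∀ s t : K, (s, t) ≠ (0, 0) → ∃! x, x ∈ L ∩ D.ruling s t

/-- The subscroll `S(1̲)` swept out by the line sections, i.e. the subscroll
corresponding to the indices with `a i = 1`. -/
def sub1 (D : ScrollData K N n a) : Set (PS K N) :=
  ⋃ (s : K) (t : K) (_ : (s, t) ≠ (0, 0)),
    linSet (Submodule.span K
      (Set.range fun i : { i : Fin n // a i = 1 } => D.w i.1 s t))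

/-- The subscroll `S(2̲)` corresponding to the indices with `a i = 2`. -/
def sub2 (D : ScrollData K N n a) : Set (PS K N) :=
  ⋃ (s : K) (t : K) (_ : (s, t) ≠ (0, 0)),
    linSet (Submodule.span K
      (Set.range fun i : { i : Fin n // a i = 2 } => D.w i.1 s t))

/-- The Segre variety `Δ = ⋃_β ⟨C_β⟩ ≅ ℙ² × ℙ^{m-k-1}`: the union of the planes of
the conic sections `C_β` of the subscroll `S(2̲)`. -/
def delta (D : ScrollData K N n a) : Set (PS K N) :=
  ⋃ (β : { i : Fin n // a i = 2 } → K) (_ : β ≠ 0),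
    linSet (Submodule.span K (Set.range fun j : Fin 3 =>
      ∑ i : { i : Fin n // a i = 2 }, β i •
        D.v i.1 ⟨(j : ℕ), by have h1 := i.2; have h2 := j.isLt; omega⟩))

end ScrollData

/-- The data of a (possibly singular) rational normal scroll in `ℙ^N` with vertex of
projective dimension `hv - 1` (empty vertex when `hv = 0`, i.e. a smooth scroll):
a cone over the smooth rational normal scroll `base`, with vertex spanned by the
vectors `zv`, the whole configuration being linearly independent and spanning `ℙ^N`. -/
structure ConeScroll (K : Type*) [Field K] (N n : ℕ) (a : Fin n → ℕ) (hv : ℕ) where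
  zv : Fin hv → (Fin (N + 1) → K)
  base : ScrollData K N n a
  indep : LinearIndependent K
    (Sum.elim zv fun q : (i : Fin n) × Fin (a i + 1) => base.v q.1 q.2)
  total : N + 1 = hv + ∑ i, (a i + 1)

namespace ConeScroll

variable {n hv : ℕ} {a : Fin n → ℕ}

/-- The vertex `Vert(X̃)` of the cone. -/
def vertex (C : ConeScroll K N n a hv) : Set (PS K N) :=
  linSet (Submodule.span K (Set.range C.zv))

/-- The linear span `⟨X̃₀⟩` of the smooth base scroll. -/
def baseSpan (C : ConeScroll K N n a hv) : Set (PS K N) :=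
  projSpan C.base.carrier

/-- The scroll `X̃ = Join(Vert(X̃), X̃₀)` itself. -/
def carrier (C : ConeScroll K N n a hv) : Set (PS K N) :=
  join C.vertex C.base.carrier

/-- `Σ_p(X̃) = 2·Vert(X̃)`: the secant locus is (set-theoretically) the vertex,
with double structure. -/
def SLempty (C : ConeScroll K N n a hv) (p : PS K N) : Prop :=
  secLocus C.carrier p = C.vertex

/-- `Σ_p(X̃) = Join(Vert(X̃), {x, y})` for two distinct points `x, y` of `⟨X̃₀⟩`. -/
def SLpair (C : ConeScroll K N n a hv) (p : PS K N) : Prop :=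
  ∃ x y : PS K N, x ∈ C.baseSpan ∧ y ∈ C.baseSpan ∧ x ≠ y ∧
    secLocus C.carrier p = join C.vertex {x, y}

/-- `Σ_p(X̃) = 2⟨Vert(X̃), x⟩` for a point `x` of a line `L ⊆ ⟨X̃₀⟩`. -/
def SLdouble (C : ConeScroll K N n a hv) (p : PS K N) : Prop :=
  ∃ L : Set (PS K N), IsLine L ∧ L ⊆ C.baseSpan ∧ ∃ x ∈ L,
    secLocus C.carrier p = projSpan (C.vertex ∪ {x})

/-- `Σ_p(X̃) = Join(Vert(X̃), L ∪ L')` for two distinct coplanar lines `L, L' ⊆ ⟨X̃₀⟩`. -/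
def SLlines (C : ConeScroll K N n a hv) (p : PS K N) : Prop :=
  ∃ L L' : Set (PS K N), IsLine L ∧ IsLine L' ∧ L ≠ L' ∧
    (∃ Pl : Set (PS K N), IsPlane Pl ∧ L ⊆ Pl ∧ L' ⊆ Pl) ∧
    L ⊆ C.baseSpan ∧ L' ⊆ C.baseSpan ∧
    secLocus C.carrier p = join C.vertex (L ∪ L')

/-- `Σ_p(X̃) = Join(Vert(X̃), V)` for a smooth plane conic `V ⊆ ⟨X̃₀⟩`. -/
def SLconic (C : ConeScroll K N n a hv) (p : PS K N) : Prop :=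
  ∃ V : Set (PS K N), IsSmoothConic V ∧ V ⊆ C.baseSpan ∧
    secLocus C.carrier p = join C.vertex V

/-- `Σ_p(X̃) = Join(Vert(X̃), W)` for a smooth quadric surface `W ⊆ ⟨X̃₀⟩`. -/
def SLquadric (C : ConeScroll K N n a hv) (p : PS K N) : Prop :=
  ∃ W : Set (PS K N), IsSmoothQuadricSurface W ∧ W ⊆ C.baseSpan ∧
    secLocus C.carrier p = join C.vertex W

end ConeScroll

/-- The homogeneous vanishing ideal of a set of projective points. -/
def vanishingIdeal (S : Set (PS K N)) : Ideal (MvPolynomial (Fin (N + 1)) K) where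
  carrier := vanishing S
  add_mem' := by
    intro f g hf hg v hv
    simp [map_add, hf v hv, hg v hv]
  zero_mem' := by intro v hv; simp
  smul_mem' := by
    intro c f hf v hv
    simp [smul_eq_mul, hf v hv]

/-- `rs` is a regular sequence on `R/I` (expressed without passing to the quotient):
the sequence stays proper modulo `I` and each entry is a nonzerodivisor modulo
`I` together with the previous entries. -/
def IsRegModulo {R : Type*} [CommRing R] (I : Ideal R) (rs : List R) : Prop :=
  (I ⊔ Ideal.span { x | x ∈ rs } ≠ ⊤) ∧
  ∀ (i : ℕ) (h : i < rs.length) (y : R),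
    rs.get ⟨i, h⟩ * y ∈ I ⊔ Ideal.span { x | x ∈ rs.take i } →
    y ∈ I ⊔ Ideal.span { x | x ∈ rs.take i }

/-- `S ⊆ ℙ^N` is arithmetically Cohen–Macaulay: its homogeneous coordinate ring
admits a regular sequence, inside the irrelevant maximal ideal, of length equal to
its Krull dimension. -/
def IsACM (S : Set (PS K N)) : Prop :=
  ∃ rs : List (MvPolynomial (Fin (N + 1)) K),
    (∀ f ∈ rs, f ∈ Ideal.span
      (Set.range (MvPolynomial.X : Fin (N + 1) → MvPolynomial (Fin (N + 1)) K))) ∧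
    IsRegModulo (vanishingIdeal S) rs ∧
    ((rs.length : ℕ∞) : WithBot ℕ∞) =
      ringKrullDim (MvPolynomial (Fin (N + 1)) K ⧸ vanishingIdeal S)

/-- The image of a subset of `ℙ^N` under the linear projection induced by a linear
map `T` on homogeneous coordinates. -/
def projImage {M : ℕ} (T : (Fin (N + 1) → K) →ₗ[K] (Fin (M + 1) → K))
    (X : Set (PS K N)) : Set (PS K M) :=
  { y | ∃ x ∈ X, y.submodule = Submodule.map T x.submodule }

end SecantLoci

namespace SecantLoci
variable {K : Type*} [Field K] {N : ℕ}

lemma mem_linSet_iff_rep {W : Submodule K (Fin (N+1) → K)} {x : PS K N} :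
    x ∈ linSet W ↔ x.rep ∈ W := by
  rw [linSet, Set.mem_setOf_eq, Projectivization.submodule_eq, Submodule.span_singleton_le_iff_mem]

lemma mk_mem_linSet_iff {W : Submodule K (Fin (N+1) → K)} {v : Fin (N+1) → K} (hv : v ≠ 0) :
    Projectivization.mk K v hv ∈ linSet W ↔ v ∈ W := by
  rw [linSet, Set.mem_setOf_eq, Projectivization.submodule_mk, Submodule.span_singleton_le_iff_mem]

lemma mk_smul_eq {v : Fin (N+1) → K} (hv : v ≠ 0) {c : K} (hc : c ≠ 0) :
    Projectivization.mk K (c • v) (smul_ne_zero hc hv) = Projectivization.mk K v hv := by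
  rw [Projectivization.mk_eq_mk_iff']
  exact ⟨c, rfl⟩

lemma line_eq_span {U : Submodule K (Fin (N+1) → K)} (hU : Module.finrank K U = 2)
    {p q : PS K N} (hp : p ∈ linSet U) (hq : q ∈ linSet U) (hpq : p ≠ q) :
    U = Submodule.span K {p.rep, q.rep} := by
  have hqr := q.rep_nonzero
  have hpr := p.rep_nonzero
  have hind : LinearIndependent K ![p.rep, q.rep] := by
    rw [linearIndependent_fin2]
    refine ⟨hqr, fun a ha => hpq ?_⟩
    have ha0 : a ≠ 0 := by rintro rfl; rw [zero_smul] at ha; exact hpr ha.symm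
    rw [← p.mk_rep, ← q.mk_rep]
    rw [Projectivization.mk_eq_mk_iff']
    exact ⟨a, ha⟩
  have hle : Submodule.span K {p.rep, q.rep} ≤ U := by
    rw [Submodule.span_le]
    rintro x (rfl | rfl)
    · exact mem_linSet_iff_rep.mp hp
    · exact mem_linSet_iff_rep.mp hq
  have hcard : Module.finrank K (Submodule.span K {p.rep, q.rep}) = 2 := by
    have := finrank_span_eq_card hind
    have hr : Set.range ![p.rep, q.rep] = {p.rep, q.rep} := by
      simp [Matrix.range_cons, Matrix.range_empty, Set.pair_comm]
    rw [hr] at this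
    simpa using this
  exact (Submodule.eq_of_le_of_finrank_eq hle (by rw [hcard, hU])).symm

/-- Avoiding finitely many subspaces not containing `G`. -/
lemma exists_mem_notMem [Infinite K] {V : Type*} [AddCommGroup V] [Module K V]
    (G : Submodule K V) (S : Finset (Submodule K V)) (h : ∀ T ∈ S, ¬ G ≤ T) :
    ∃ v ∈ G, ∀ T ∈ S, v ∉ T := by
  by_contra hc
  push_neg at hc
  have hcov : ⋃ T : {T // T ∈ S}, ((Submodule.comap G.subtype T.1 : Submodule K G) : Set G)
      = Set.univ := by
    apply Set.eq_univ_of_forall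
    intro g
    obtain ⟨T, hT, hgT⟩ := hc g.1 g.2
    exact Set.mem_iUnion.mpr ⟨⟨T, hT⟩, hgT⟩
  obtain ⟨⟨T, hTS⟩, hT⟩ := Subspace.exists_eq_top_of_iUnion_eq_univ hcov
  apply h T hTS
  intro x hx
  have : (⟨x, hx⟩ : G) ∈ Submodule.comap G.subtype T := hT ▸ Submodule.mem_top
  exact this

lemma finite_ker_pencil {W : Type*} [AddCommGroup W] [Module K W] [FiniteDimensional K W]
    (A B : W →ₗ[K] W) (lam0 : K) (h : Function.Injective (A + lam0 • B)) :
    {lam : K | LinearMap.ker (A + lam • B) ≠ ⊥}.Finite := by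
  classical
  cases subsingleton_or_nontrivial W
  · apply Set.Finite.subset (Set.finite_empty)
    intro lam hlam
    exact absurd (Subsingleton.elim _ _) hlam
  obtain ⟨m, b⟩ : ∃ m, Nonempty (Module.Basis (Fin m) K W) :=
    ⟨_, ⟨Module.finBasis K W⟩⟩
  obtain ⟨bW⟩ := b
  set MA := LinearMap.toMatrix bW bW A with hMA
  set MB := LinearMap.toMatrix bW bW B with hMB
  set P : Polynomial K := (MA.map Polynomial.C + (Polynomial.X : Polynomial K) • MB.map Polynomial.C).det with hP
  have heval : ∀ lam : K, P.eval lam = (MA + lam • MB).det := by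
    intro lam
    rw [hP, ← Polynomial.coe_evalRingHom, RingHom.map_det]
    congr 1
    ext i j
    simp only [RingHom.mapMatrix_apply, Matrix.map_apply, Matrix.add_apply, Matrix.smul_apply, smul_eq_mul,
      Polynomial.coe_evalRingHom, Polynomial.eval_add, Polynomial.eval_mul,
      Polynomial.eval_C, Polynomial.eval_X]
  have hmat : ∀ lam : K, LinearMap.toMatrix bW bW (A + lam • B) = MA + lam • MB := by
    intro lam; rw [map_add, map_smul, hMA, hMB]
  have hP0 : P ≠ 0 := by
    intro h0
    have : (MA + lam0 • MB).det = 0 := by rw [← heval, h0, Polynomial.eval_zero]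
    rw [← Matrix.exists_mulVec_eq_zero_iff] at this
    obtain ⟨v, hv, hmul⟩ := this
    set w := bW.repr.symm (Finsupp.equivFunOnFinite.symm v) with hw
    have hrepr : ⇑(bW.repr w) = v := by
      rw [hw, LinearEquiv.apply_symm_apply]; rfl
    have hfw : ⇑(bW.repr ((A + lam0 • B) w)) = 0 := by
      rw [← LinearMap.toMatrix_mulVec_repr bW bW (A + lam0 • B) w, hmat, hrepr, hmul]
    have hfw' : (A + lam0 • B) w = 0 := by
      have h2 : bW.repr ((A + lam0 • B) w) = 0 := Finsupp.ext (fun i => congrFun hfw i)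
      simpa using congrArg bW.repr.symm h2
    have hw0 : w = 0 := h (by rw [hfw', map_zero])
    apply hv
    rw [← hrepr, hw0, map_zero]
    rfl
  apply Set.Finite.subset (Polynomial.finite_setOf_isRoot hP0)
  intro lam hlam
  obtain ⟨w, hwmem, hw0⟩ := Submodule.exists_mem_ne_zero_of_ne_bot hlam
  have hmul : (MA + lam • MB).mulVec (bW.repr w) = 0 := by
    have := LinearMap.toMatrix_mulVec_repr bW bW (A + lam • B) w
    rw [hmat] at this
    rw [this]
    rw [LinearMap.mem_ker.mp hwmem]
    simp
  have hdet : (MA + lam • MB).det = 0 := by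
    rw [← Matrix.exists_mulVec_eq_zero_iff]
    refine ⟨bW.repr w, fun hz => hw0 ?_, hmul⟩
    have : bW.repr w = 0 := by ext i; exact congrFun hz i
    simpa using congrArg bW.repr.symm this
  show P.IsRoot lam
  rw [Polynomial.IsRoot, heval, hdet]


variable {n : ℕ} {a : Fin n → ℕ}


/-- Index type for columns / minor rows. -/
abbrev MIdx (a : Fin n → ℕ) := (i : Fin n) × Fin (a i)
abbrev QIdx (a : Fin n → ℕ) := (i : Fin n) × Fin (a i + 1)

def fIdx (c : MIdx a) : QIdx a := ⟨c.1, c.2.castSucc⟩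
def sIdx (c : MIdx a) : QIdx a := ⟨c.1, c.2.succ⟩

lemma idx_cover (ha : ∀ i, 1 ≤ a i) (q : QIdx a) :
    (∃ c : MIdx a, q = fIdx c) ∨ (∃ c : MIdx a, q = sIdx c) := by
  obtain ⟨i, j⟩ := q
  rcases lt_or_ge (j : ℕ) (a i) with h | h
  · exact Or.inl ⟨⟨i, ⟨j, h⟩⟩, by simp [fIdx, Fin.ext_iff]⟩
  · have hj : (j : ℕ) = a i := le_antisymm (Nat.lt_succ_iff.mp j.isLt) h
    have h1 := ha i
    refine Or.inr ⟨⟨i, ⟨a i - 1, by omega⟩⟩, ?_⟩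
    simp only [sIdx, Sigma.mk.inj_iff, heq_eq_eq, true_and]
    rw [Fin.ext_iff]
    simp [Fin.val_succ]
    omega

namespace ScrollData
variable (D : ScrollData K N n a) (htot : N + 1 = ∑ i, (a i + 1))

/-- The `v`'s form a basis. -/
def bas : Module.Basis (QIdx a) K (Fin (N + 1) → K) :=
  haveI : Nonempty (QIdx a) := by
    rw [← Fintype.card_pos_iff]
    have hc : Fintype.card (QIdx a) = ∑ i, (a i + 1) := by simp
    omega
  basisOfLinearIndependentOfCardEqFinrank D.indep
    (by simp [← htot, Module.finrank_pi])

lemma bas_apply (q : QIdx a) : bas D htot q = D.v q.1 q.2 := by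
  haveI : Nonempty (QIdx a) := by
    rw [← Fintype.card_pos_iff]
    have hc : Fintype.card (QIdx a) = ∑ i, (a i + 1) := by simp
    omega
  have := coe_basisOfLinearIndependentOfCardEqFinrank D.indep
    (show Fintype.card (QIdx a) = Module.finrank K (Fin (N+1) → K) by
      simp [← htot, Module.finrank_pi])
  rw [bas]
  exact congrFun this q

/-- Coordinates with respect to the basis of directrix vectors. -/
def crd (u : Fin (N + 1) → K) (q : QIdx a) : K := (bas D htot).repr u q

lemma crd_add (u u' : Fin (N+1) → K) (q : QIdx a) :
    crd D htot (u + u') q = crd D htot u q + crd D htot u' q := by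
  simp [crd]

lemma crd_smul (c : K) (u : Fin (N+1) → K) (q : QIdx a) :
    crd D htot (c • u) q = c * crd D htot u q := by
  simp [crd]

lemma crd_zero (q : QIdx a) : crd D htot (0 : Fin (N+1) → K) q = 0 := by simp [crd]

lemma crd_ext {u u' : Fin (N+1) → K} (h : ∀ q, crd D htot u q = crd D htot u' q) : u = u' := by
  have : (bas D htot).repr u = (bas D htot).repr u' := Finsupp.ext h
  simpa using congrArg ((bas D htot).repr.symm) this

lemma eq_zero_of_crd_eq_zero {u : Fin (N+1) → K} (h : ∀ q, crd D htot u q = 0) : u = 0 :=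
  crd_ext D htot (fun q => by rw [h q, crd_zero])

/-- The pencil of linear maps whose kernels are the rulings. -/
def Lmap (s t : K) : (Fin (N + 1) → K) →ₗ[K] (MIdx a → K) :=
  LinearMap.pi fun c => t • ((bas D htot).coord (fIdx c)) - s • ((bas D htot).coord (sIdx c))

lemma Lmap_apply (s t : K) (u : Fin (N+1) → K) (c : MIdx a) :
    Lmap D htot s t u c = t * crd D htot u (fIdx c) - s * crd D htot u (sIdx c) := by
  simp [Lmap, crd, LinearMap.pi_apply, Module.Basis.coord_apply, smul_eq_mul]

lemma mem_ker_Lmap_iff {s t : K} {u : Fin (N+1) → K} :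
    u ∈ LinearMap.ker (Lmap D htot s t) ↔
      ∀ c : MIdx a, t * crd D htot u (fIdx c) = s * crd D htot u (sIdx c) := by
  rw [LinearMap.mem_ker]
  constructor
  · intro h c
    have := congrFun h c
    rw [Lmap_apply] at this
    simpa [sub_eq_zero] using this
  · intro h
    funext c
    rw [Lmap_apply, h c]
    simp

lemma crd_w_same (s t : K) (i : Fin n) (j : Fin (a i + 1)) :
    crd D htot (D.w i s t) ⟨i, j⟩ = s ^ (a i - (j : ℕ)) * t ^ (j : ℕ) := by
  classical
  have : D.w i s t = ∑ j : Fin (a i + 1), (s ^ (a i - (j:ℕ)) * t ^ (j:ℕ)) • bas D htot ⟨i, j⟩ := by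
    rw [w]
    exact Finset.sum_congr rfl fun j _ => by rw [bas_apply]
  rw [crd, this]
  simp only [map_sum, map_smul, Module.Basis.repr_self, Finsupp.coe_finset_sum, Finsupp.coe_smul,
    Finset.sum_apply, Pi.smul_apply, smul_eq_mul]
  rw [Finset.sum_eq_single j]
  · simp
  · intro b _ hb
    rw [Finsupp.single_apply]
    have : (⟨i, b⟩ : QIdx a) ≠ ⟨i, j⟩ := by
      simp only [ne_eq, Sigma.mk.inj_iff, heq_eq_eq, true_and]; exact hb
    simp [this]
  · intro h; exact absurd (Finset.mem_univ j) h

lemma crd_w_ne (s t : K) {i i' : Fin n} (h : i' ≠ i) (j : Fin (a i' + 1)) :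
    crd D htot (D.w i s t) ⟨i', j⟩ = 0 := by
  classical
  have : D.w i s t = ∑ j : Fin (a i + 1), (s ^ (a i - (j:ℕ)) * t ^ (j:ℕ)) • bas D htot ⟨i, j⟩ := by
    rw [w]
    exact Finset.sum_congr rfl fun j _ => by rw [bas_apply]
  rw [crd, this]
  simp only [map_sum, map_smul, Module.Basis.repr_self, Finsupp.coe_finset_sum, Finsupp.coe_smul,
    Finset.sum_apply, Pi.smul_apply, smul_eq_mul]
  apply Finset.sum_eq_zero
  intro b _
  rw [Finsupp.single_apply]
  have : (⟨i, b⟩ : QIdx a) ≠ ⟨i', j⟩ := by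
    simp only [ne_eq, Sigma.mk.inj_iff]
    intro ⟨h1, _⟩; exact h h1.symm
  simp [this]

lemma Lmap_smul_param (c s t : K) : Lmap D htot (c * s) (c * t) = c • Lmap D htot s t := by
  apply LinearMap.ext; intro u
  funext cc
  rw [LinearMap.smul_apply]
  show Lmap D htot (c*s) (c*t) u cc = c * (Lmap D htot s t u) cc
  rw [Lmap_apply, Lmap_apply]
  ring

lemma Lmap_decomp (s t : K) : Lmap D htot s t = s • Lmap D htot 1 0 + t • Lmap D htot 0 1 := by
  apply LinearMap.ext; intro u
  funext cc
  rw [LinearMap.add_apply, LinearMap.smul_apply, LinearMap.smul_apply]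
  show Lmap D htot s t u cc = s * (Lmap D htot 1 0 u) cc + t * (Lmap D htot 0 1 u) cc
  rw [Lmap_apply, Lmap_apply, Lmap_apply]
  ring

lemma ker_Lmap_proportional {s t s' t' : K} (hst : (s, t) ≠ (0, 0)) (h : s * t' - t * s' = 0)
    (hst' : (s', t') ≠ (0, 0)) :
    LinearMap.ker (Lmap D htot s t) = LinearMap.ker (Lmap D htot s' t') := by
  have hex : ∃ c : K, c ≠ 0 ∧ s' = c * s ∧ t' = c * t := by
    rcases eq_or_ne s 0 with hs | hs
    · have ht : t ≠ 0 := by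
        intro h'; exact hst (by rw [hs, h'])
      have hs' : s' = 0 := by
        have := h; rw [hs] at this; simp at this
        rcases this with h1 | h1
        · exact absurd h1 ht
        · exact h1
      have ht' : t' ≠ 0 := by
        intro h'; exact hst' (by rw [hs', h'])
      exact ⟨t' / t, div_ne_zero ht' ht, by rw [hs, hs']; ring, by field_simp⟩
    · have ht' : t' = t * s' / s := by
        field_simp
        linear_combination h
      refine ⟨s' / s, ?_, by field_simp, by rw [ht']; ring⟩
      intro hc
      have hs'0 : s' = 0 := by
        field_simp at hc; simpa using hc
      have ht'0 : t' = 0 := by rw [ht', hs'0]; ring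
      exact hst' (by rw [hs'0, ht'0])
  obtain ⟨c, hc, rfl, rfl⟩ := hex
  rw [Lmap_smul_param, LinearMap.ker_smul _ c hc]

lemma ker_Lmap_disjoint {s t s' t' : K} (h : s * t' - t * s' ≠ 0) (ha : ∀ i, 1 ≤ a i)
    {u : Fin (N+1) → K} (hu : u ∈ LinearMap.ker (Lmap D htot s t))
    (hu' : u ∈ LinearMap.ker (Lmap D htot s' t')) : u = 0 := by
  rw [mem_ker_Lmap_iff] at hu hu'
  have hf : ∀ c : MIdx a, crd D htot u (fIdx c) = 0 := by
    intro c
    have h1 := hu c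
    have h2 := hu' c
    have : (s * t' - t * s') * crd D htot u (fIdx c) = 0 := by
      linear_combination s * h2 - s' * h1
    exact (mul_eq_zero.mp this).resolve_left h
  have hs : ∀ c : MIdx a, crd D htot u (sIdx c) = 0 := by
    intro c
    have h1 := hu c
    have h2 := hu' c
    have : (s * t' - t * s') * crd D htot u (sIdx c) = 0 := by
      linear_combination t * h2 - t' * h1
    exact (mul_eq_zero.mp this).resolve_left h
  apply eq_zero_of_crd_eq_zero D htot
  intro q
  rcases idx_cover ha q with ⟨c, rfl⟩ | ⟨c, rfl⟩
  · exact hf c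
  · exact hs c

lemma w_mem_ker (s t : K) (i : Fin n) : D.w i s t ∈ LinearMap.ker (Lmap D htot s t) := by
  rw [mem_ker_Lmap_iff]
  intro c
  rcases eq_or_ne c.1 i with rfl | hne
  · have hf : fIdx c = ⟨c.1, c.2.castSucc⟩ := rfl
    have hs : sIdx c = ⟨c.1, c.2.succ⟩ := rfl
    rw [hf, hs, crd_w_same, crd_w_same]
    have hlt : (c.2 : ℕ) < a c.1 := c.2.isLt
    have e1 : (c.2.castSucc : ℕ) = (c.2 : ℕ) := rfl
    have e2 : (c.2.succ : ℕ) = (c.2 : ℕ) + 1 := rfl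
    rw [e1, e2]
    have : a c.1 - (c.2 : ℕ) = (a c.1 - ((c.2:ℕ) + 1)) + 1 := by omega
    rw [this, pow_succ, pow_succ]
    ring
  · have h1 : crd D htot (D.w i s t) (fIdx c) = 0 := crd_w_ne D htot s t hne _
    have h2 : crd D htot (D.w i s t) (sIdx c) = 0 := crd_w_ne D htot s t hne _
    rw [h1, h2, mul_zero, mul_zero]

lemma span_w_eq_ker {s t : K} (hst : (s, t) ≠ (0, 0)) :
    Submodule.span K (Set.range fun i => D.w i s t) = LinearMap.ker (Lmap D htot s t) := by
  apply le_antisymm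
  · rw [Submodule.span_le]
    rintro x ⟨i, rfl⟩
    exact w_mem_ker D htot s t i
  · intro u hu
    rw [mem_ker_Lmap_iff] at hu
    rcases eq_or_ne s 0 with rfl | hs
    · -- t ≠ 0 case
      have ht : t ≠ 0 := fun h => hst (by rw [h])
      -- relations: t * crd u (fIdx c) = 0, so crd u (fIdx c) = 0 for all c.
      -- u is supported on ⟨i, last⟩.
      have hf : ∀ c : MIdx a, crd D htot u (fIdx c) = 0 := by
        intro c
        have := hu c
        rw [zero_mul] at this
        exact (mul_eq_zero.mp this).resolve_left ht
      have : u = ∑ i : Fin n, ((t ^ (a i))⁻¹ * crd D htot u ⟨i, Fin.last (a i)⟩) • D.w i 0 t := by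
        apply crd_ext D htot
        intro q
        obtain ⟨i', j⟩ := q
        have hsum : crd D htot (∑ i : Fin n, ((t ^ (a i))⁻¹ * crd D htot u ⟨i, Fin.last (a i)⟩) • D.w i 0 t) ⟨i', j⟩
            = ((t ^ (a i'))⁻¹ * crd D htot u ⟨i', Fin.last (a i')⟩) * crd D htot (D.w i' 0 t) ⟨i', j⟩ := by
          rw [crd, map_sum]
          rw [Finsupp.coe_finset_sum, Finset.sum_apply]
          rw [Finset.sum_eq_single i']
          · rw [map_smul]; rfl
          · intro b _ hb
            rw [map_smul]
            have : crd D htot (D.w b 0 t) ⟨i', j⟩ = 0 := crd_w_ne D htot 0 t (Ne.symm hb) j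
            rw [crd] at this
            show ((((t ^ (a b))⁻¹ * crd D htot u ⟨b, Fin.last (a b)⟩)) • ((bas D htot).repr (D.w b 0 t))) ⟨i', j⟩ = 0
            rw [Finsupp.smul_apply, this, smul_zero]
          · intro h; exact absurd (Finset.mem_univ i') h
        rw [hsum, crd_w_same]
        rcases eq_or_ne (j : ℕ) (a i') with hj | hj
        · have hjlast : j = Fin.last (a i') := by rwa [Fin.ext_iff]
          subst hjlast
          rw [Fin.val_last]
          have : a i' - a i' = 0 := by omega
          rw [this, pow_zero, one_mul]
          field_simp
        · -- j < a i', so crd u ⟨i', j⟩ = 0 and 0 ^ (a i' - j) = 0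
          have hjlt : (j : ℕ) < a i' := by omega
          have hcu : crd D htot u ⟨i', j⟩ = 0 := by
            have := hf ⟨i', ⟨(j:ℕ), hjlt⟩⟩
            have he : fIdx (⟨i', ⟨(j:ℕ), hjlt⟩⟩ : MIdx a) = ⟨i', j⟩ := by
              simp only [fIdx, Sigma.mk.inj_iff, heq_eq_eq, true_and]
              rw [Fin.ext_iff]; rfl
            rwa [he] at this
          rw [hcu]
          have : (0:K) ^ (a i' - (j:ℕ)) = 0 := by
            apply zero_pow; omega
          rw [this]; ring
      rw [this]
      apply Submodule.sum_mem
      intro i _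
      exact Submodule.smul_mem _ _ (Submodule.subset_span ⟨i, rfl⟩)
    · -- s ≠ 0 case
      have key : ∀ (i : Fin n) (j : Fin (a i + 1)),
          s ^ (j:ℕ) * crd D htot u ⟨i, j⟩ = t ^ (j:ℕ) * crd D htot u ⟨i, 0⟩ := by
        intro i j
        induction j using Fin.induction with
        | zero => simp
        | succ j ih =>
          have hc := hu ⟨i, j⟩
          have e1 : fIdx (⟨i, j⟩ : MIdx a) = ⟨i, j.castSucc⟩ := rfl
          have e2 : sIdx (⟨i, j⟩ : MIdx a) = ⟨i, j.succ⟩ := rfl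
          rw [e1, e2] at hc
          simp only [Fin.coe_castSucc] at ih
          simp only [Fin.val_succ]
          rw [pow_succ, pow_succ]
          linear_combination t * ih - s ^ (j:ℕ) * hc
      have : u = ∑ i : Fin n, ((s ^ (a i))⁻¹ * crd D htot u ⟨i, 0⟩) • D.w i s t := by
        apply crd_ext D htot
        intro q
        obtain ⟨i', j⟩ := q
        have hsum : crd D htot (∑ i : Fin n, ((s ^ (a i))⁻¹ * crd D htot u ⟨i, 0⟩) • D.w i s t) ⟨i', j⟩
            = ((s ^ (a i'))⁻¹ * crd D htot u ⟨i', 0⟩) * crd D htot (D.w i' s t) ⟨i', j⟩ := by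
          rw [crd, map_sum]
          rw [Finsupp.coe_finset_sum, Finset.sum_apply]
          rw [Finset.sum_eq_single i']
          · rw [map_smul]; rfl
          · intro b _ hb
            rw [map_smul]
            have : crd D htot (D.w b s t) ⟨i', j⟩ = 0 := crd_w_ne D htot s t (Ne.symm hb) j
            rw [crd] at this
            show ((((s ^ (a b))⁻¹ * crd D htot u ⟨b, 0⟩)) • ((bas D htot).repr (D.w b s t))) ⟨i', j⟩ = 0
            rw [Finsupp.smul_apply, this, smul_zero]
          · intro h; exact absurd (Finset.mem_univ i') h
        rw [hsum, crd_w_same]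
        have hkey := key i' j
        have hspow : (s : K) ^ (j : ℕ) ≠ 0 := pow_ne_zero _ hs
        apply mul_left_cancel₀ hspow
        rw [hkey]
        have hj : (j : ℕ) ≤ a i' := Nat.lt_succ_iff.mp j.isLt
        have hpow : s ^ (j:ℕ) * s ^ (a i' - (j:ℕ)) = s ^ (a i') := by
          rw [← pow_add]; congr 1; omega
        field_simp
        linear_combination (- t ^ (j:ℕ) * crd D htot u ⟨i', 0⟩) * hpow
      rw [this]
      apply Submodule.sum_mem
      intro i _
      exact Submodule.smul_mem _ _ (Submodule.subset_span ⟨i, rfl⟩)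

lemma mem_ruling_iff {s t : K} (hst : (s, t) ≠ (0, 0)) (x : PS K N) :
    x ∈ D.ruling s t ↔ x.rep ∈ LinearMap.ker (Lmap D htot s t) := by
  rw [ruling, mem_linSet_iff_rep, span_w_eq_ker D htot hst]

lemma mem_carrier_iff (x : PS K N) :
    x ∈ D.carrier ↔ ∃ s t : K, (s, t) ≠ (0, 0) ∧
      x.rep ∈ LinearMap.ker (Lmap D htot s t) := by
  constructor
  · intro hx
    simp only [carrier, Set.mem_iUnion] at hx
    obtain ⟨s, t, hst, hx⟩ := hx
    rw [mem_ruling_iff D htot hst] at hx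
    exact ⟨s, t, hst, hx⟩
  · rintro ⟨s, t, hst, hx⟩
    simp only [carrier, Set.mem_iUnion]
    exact ⟨s, t, hst, by rw [mem_ruling_iff D htot hst]; exact hx⟩

lemma cone_vec_mem {u : Fin (N+1) → K} (hu0 : u ≠ 0) (hu : u ∈ cone D.carrier) :
    ∃ s t : K, (s, t) ≠ (0, 0) ∧ u ∈ LinearMap.ker (Lmap D htot s t) := by
  have hx := hu hu0
  rw [mem_carrier_iff D htot] at hx
  obtain ⟨s, t, hst, hker⟩ := hx
  obtain ⟨c, hc⟩ := Projectivization.exists_smul_eq_mk_rep K u hu0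
  refine ⟨s, t, hst, ?_⟩
  rw [Units.smul_def] at hc
  have : (c : K) • u ∈ LinearMap.ker (Lmap D htot s t) := by rw [hc]; exact hker
  have h2 := Submodule.smul_mem _ ((c⁻¹ : Kˣ) : K) this
  rwa [smul_smul, Units.inv_mul, one_smul] at h2

lemma crd_sum (x : Fin (N+1) → K) (q : QIdx a) :
    ∑ k : Fin (N+1), x k * (bas D htot).coord q (Pi.single k 1) = crd D htot x q := by
  have hx : x = ∑ k : Fin (N+1), x k • (Pi.single k 1 : Fin (N+1) → K) := by
    funext j
    simp [Finset.sum_apply, Pi.single_apply]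
  rw [crd, ← Module.Basis.coord_apply]
  conv_rhs => rw [hx]
  rw [map_sum]
  exact Finset.sum_congr rfl fun k _ => by rw [map_smul, smul_eq_mul]

/-- A linear form in the homogeneous coordinates computing `crd`. -/
def coordPoly (q : QIdx a) : MvPolynomial (Fin (N+1)) K :=
  ∑ k : Fin (N+1), C ((bas D htot).coord q (Pi.single k 1)) * X k

lemma eval_coordPoly (u : Fin (N+1) → K) (q : QIdx a) :
    eval u (coordPoly D htot q) = crd D htot u q := by
  rw [coordPoly, map_sum]
  simp only [eval_mul, eval_C, eval_X]
  rw [← crd_sum D htot u q]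
  exact Finset.sum_congr rfl fun k _ => mul_comm _ _

lemma pderiv_coordPoly (k : Fin (N+1)) (q : QIdx a) :
    pderiv k (coordPoly D htot q) = C ((bas D htot).coord q (Pi.single k 1)) := by
  classical
  rw [coordPoly, map_sum]
  rw [Finset.sum_eq_single k]
  · rw [pderiv_C_mul, pderiv_X_self, mul_one]
  · intro j _ hj
    rw [pderiv_C_mul, pderiv_X_of_ne hj, mul_zero]
  · intro h; exact absurd (Finset.mem_univ k) h

/-- The 2×2 minors cutting out the scroll. -/
def minorPoly (c d : MIdx a) : MvPolynomial (Fin (N+1)) K :=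
  coordPoly D htot (fIdx c) * coordPoly D htot (sIdx d)
    - coordPoly D htot (sIdx c) * coordPoly D htot (fIdx d)

lemma eval_minorPoly (u : Fin (N+1) → K) (c d : MIdx a) :
    eval u (minorPoly D htot c d) =
      crd D htot u (fIdx c) * crd D htot u (sIdx d)
        - crd D htot u (sIdx c) * crd D htot u (fIdx d) := by
  rw [minorPoly, map_sub, map_mul, map_mul, eval_coordPoly, eval_coordPoly,
    eval_coordPoly, eval_coordPoly]

lemma minorPoly_vanishing (c d : MIdx a) : minorPoly D htot c d ∈ vanishing D.carrier := by
  intro v hv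
  rcases eq_or_ne v 0 with rfl | hv0
  · rw [eval_minorPoly]; simp [crd_zero]
  · obtain ⟨s, t, hst, hker⟩ := cone_vec_mem D htot hv0 hv
    rw [mem_ker_Lmap_iff] at hker
    have h1 := hker c
    have h2 := hker d
    rw [eval_minorPoly]
    set A := crd D htot v (fIdx c)
    set B := crd D htot v (sIdx c)
    set A' := crd D htot v (fIdx d)
    set B' := crd D htot v (sIdx d)
    have hts : t * (A * B' - B * A') = 0 := by linear_combination B' * h1 - B * h2
    have hss : s * (A * B' - B * A') = 0 := by linear_combination A' * h1 - A * h2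
    rcases eq_or_ne t 0 with rfl | ht
    · have hs : s ≠ 0 := fun h => hst (by rw [h])
      exact (mul_eq_zero.mp hss).resolve_left hs
    · exact (mul_eq_zero.mp hts).resolve_left ht

lemma sum_pderiv_minor (x u : Fin (N+1) → K) (c d : MIdx a) :
    ∑ k : Fin (N+1), x k * eval u (pderiv k (minorPoly D htot c d)) =
      crd D htot x (fIdx c) * crd D htot u (sIdx d)
      + crd D htot u (fIdx c) * crd D htot x (sIdx d)
      - crd D htot x (sIdx c) * crd D htot u (fIdx d)
      - crd D htot u (sIdx c) * crd D htot x (fIdx d) := by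
  have hterm : ∀ k : Fin (N+1), x k * eval u (pderiv k (minorPoly D htot c d)) =
      (x k * (bas D htot).coord (fIdx c) (Pi.single k 1)) * crd D htot u (sIdx d)
      + crd D htot u (fIdx c) * (x k * (bas D htot).coord (sIdx d) (Pi.single k 1))
      - (x k * (bas D htot).coord (sIdx c) (Pi.single k 1)) * crd D htot u (fIdx d)
      - crd D htot u (sIdx c) * (x k * (bas D htot).coord (fIdx d) (Pi.single k 1)) := by
    intro k
    rw [minorPoly, map_sub, pderiv_mul, pderiv_mul]
    simp only [pderiv_coordPoly, map_sub, map_add, eval_mul, eval_C, eval_coordPoly]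
    ring
  rw [Finset.sum_congr rfl fun k _ => hterm k]
  rw [Finset.sum_sub_distrib, Finset.sum_sub_distrib, Finset.sum_add_distrib]
  rw [← Finset.sum_mul, ← Finset.mul_sum, ← Finset.sum_mul, ← Finset.mul_sum]
  rw [crd_sum, crd_sum, crd_sum, crd_sum]

lemma span_pair_smul_right {V : Type*} [AddCommGroup V] [Module K V] (x y : V) {c : K}
    (hc : c ≠ 0) : Submodule.span K {x, c • y} = Submodule.span K {x, y} := by
  apply le_antisymm <;> rw [Submodule.span_le] <;> rintro z (rfl | rfl)
  · exact Submodule.subset_span (by left; rfl)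
  · exact Submodule.smul_mem _ _ (Submodule.subset_span (by right; rfl))
  · exact Submodule.subset_span (by left; rfl)
  · have hmem : c • z ∈ Submodule.span K {x, c • z} := Submodule.subset_span (by right; rfl)
    have h2 := Submodule.smul_mem _ c⁻¹ hmem
    rwa [smul_smul, inv_mul_cancel₀ hc, one_smul] at h2

lemma span_singleton_inf_eq_bot {V : Type*} [AddCommGroup V] [Module K V] {u : V}
    {P : Submodule K V} (hu : u ∉ P) : (K ∙ u) ⊓ P = ⊥ := by
  rw [eq_bot_iff]
  rintro x hx
  rw [Submodule.mem_inf] at hx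
  obtain ⟨hx1, hx2⟩ := hx
  obtain ⟨c, rfl⟩ := Submodule.mem_span_singleton.mp hx1
  rcases eq_or_ne c 0 with rfl | hc
  · simp
  · exfalso
    apply hu
    have := Submodule.smul_mem P c⁻¹ hx2
    rwa [smul_smul, inv_mul_cancel₀ hc, one_smul] at this

/-- Extraction of a secant line through `p` and a given point of the secant cone. -/
lemma secant_line_at {W : Submodule K (Fin (N+1) → K)} {p : PS K N}
    (hsec : secCone D.carrier p = linSet W)
    {v : Fin (N+1) → K} (hv0 : v ≠ 0) (hvW : v ∈ W)
    (hvnp : Projectivization.mk K v hv0 ≠ p) :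
    (∃ x y : PS K N, x ∈ D.carrier ∧ y ∈ D.carrier ∧ x ≠ y ∧
        x.rep ∈ Submodule.span K {p.rep, v} ∧ y.rep ∈ Submodule.span K {p.rep, v}) ∨
    (∃ z : PS K N, z ∈ D.carrier ∧ z.rep ∈ Submodule.span K {p.rep, v} ∧
        p ∈ tangentSpace D.carrier z) := by
  have hq : Projectivization.mk K v hv0 ∈ secCone D.carrier p := by
    rw [hsec]
    exact (mk_mem_linSet_iff hv0).mpr hvW
  rw [secCone] at hq
  rcases hq with hq | hq
  · exact absurd hq hvnp
  rw [Set.mem_iUnion₂] at hq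
  obtain ⟨L, ⟨⟨hLline, hLcase⟩, hpL⟩, hqL⟩ := hq
  obtain ⟨U, hU2, rfl⟩ := hLline
  have hUspan : U = Submodule.span K {p.rep, v} := by
    have h1 : U = Submodule.span K {p.rep, (Projectivization.mk K v hv0).rep} :=
      line_eq_span (show Module.finrank K U = 2 by rw [hU2]) hpL hqL (Ne.symm hvnp)
    obtain ⟨c, hc⟩ := Projectivization.exists_smul_eq_mk_rep K v hv0
    rw [Units.smul_def] at hc
    rw [h1, ← hc, span_pair_smul_right _ _ (Units.ne_zero c)]
  rcases hLcase with ⟨x, hx, y, hy, hxy⟩ | ⟨z, hz, htan⟩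
  · left
    refine ⟨x, y, hx.1, hy.1, hxy, ?_, ?_⟩
    · rw [← hUspan]; exact mem_linSet_iff_rep.mp hx.2
    · rw [← hUspan]; exact mem_linSet_iff_rep.mp hy.2
  · right
    refine ⟨z, hz.1, ?_, htan hpL⟩
    rw [← hUspan]; exact mem_linSet_iff_rep.mp hz.2

/-- Finiteness of the set of parameter kernels, given one injective parameter. -/
lemma finite_param_kernels {s₁ t₁ : K} (hst₁ : (s₁, t₁) ≠ (0, 0))
    {W : Submodule K (Fin (N+1) → K)}
    (hbot : W ⊓ LinearMap.ker (Lmap D htot s₁ t₁) = ⊥) :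
    {U : Submodule K (Fin (N+1) → K) |
      ∃ s t : K, (s, t) ≠ (0, 0) ∧ U = W ⊓ LinearMap.ker (Lmap D htot s t)}.Finite := by
  classical
  set Lh : K → K → (W →ₗ[K] (MIdx a → K)) :=
    fun s t => (Lmap D htot s t).comp W.subtype with hLh
  have hinj : LinearMap.ker (Lh s₁ t₁) = ⊥ := by
    rw [eq_bot_iff]
    intro x hx
    rw [LinearMap.mem_ker, hLh] at hx
    have hx1 : (x : Fin (N+1) → K) ∈ W ⊓ LinearMap.ker (Lmap D htot s₁ t₁) :=
      ⟨x.2, hx⟩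
    rw [hbot] at hx1
    have : (x : Fin (N+1) → K) = 0 := hx1
    exact Submodule.mem_bot K |>.mpr (by ext : 1; exact this)
  obtain ⟨G, hG⟩ := (Lh s₁ t₁).exists_leftInverse_of_injective hinj
  set E₁ : W →ₗ[K] W := G.comp (Lh 1 0) with hE₁
  set E₂ : W →ₗ[K] W := G.comp (Lh 0 1) with hE₂
  have hdecomp : ∀ s t : K, G.comp (Lh s t) = s • E₁ + t • E₂ := by
    intro s t
    have h1 : Lh s t = s • Lh 1 0 + t • Lh 0 1 := by
      show (Lmap D htot s t).comp W.subtype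
          = s • (Lmap D htot 1 0).comp W.subtype + t • (Lmap D htot 0 1).comp W.subtype
      rw [Lmap_decomp D htot s t, LinearMap.add_comp, LinearMap.smul_comp, LinearMap.smul_comp]
    rw [h1, LinearMap.comp_add, LinearMap.comp_smul, LinearMap.comp_smul, hE₁, hE₂]
  have hid : s₁ • E₁ + t₁ • E₂ = LinearMap.id := by rw [← hdecomp, hG]
  -- kernel elements transfer
  have htrans : ∀ (s t : K), ∀ w : Fin (N+1) → K, w ≠ 0 → w ∈ W →
      w ∈ LinearMap.ker (Lmap D htot s t) →
      LinearMap.ker (s • E₁ + t • E₂) ≠ ⊥ := by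
    intro s t w hw0 hwW hwker
    have hmem : (⟨w, hwW⟩ : W) ∈ LinearMap.ker (s • E₁ + t • E₂) := by
      rw [LinearMap.mem_ker, ← hdecomp]
      show G ((Lh s t) ⟨w, hwW⟩) = 0
      have : (Lh s t) ⟨w, hwW⟩ = 0 := by
        rw [hLh]
        exact hwker
      rw [this, map_zero]
    intro hbot2
    rw [hbot2, Submodule.mem_bot] at hmem
    apply hw0
    exact congrArg Subtype.val hmem
  rcases eq_or_ne t₁ 0 with rfl | ht₁
  · -- s₁ ≠ 0; use parametrization (1, lam)
    have hs₁ : s₁ ≠ 0 := fun h => hst₁ (by rw [h])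
    have hE₁id : E₁ = s₁⁻¹ • LinearMap.id := by
      rw [← hid]; rw [zero_smul, add_zero, smul_smul, inv_mul_cancel₀ hs₁, one_smul]
    have hinj0 : Function.Injective ⇑(E₁ + (0:K) • E₂) := by
      rw [zero_smul, add_zero, hE₁id]
      intro x y hxy
      simp only [LinearMap.smul_apply, LinearMap.id_apply] at hxy
      have := congrArg (fun z => s₁ • z) hxy
      simpa [smul_smul, mul_inv_cancel₀ hs₁] using this
    have hfin := finite_ker_pencil E₁ E₂ 0 hinj0
    apply Set.Finite.subset (Set.Finite.insert ⊥ (Set.Finite.insert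
      (W ⊓ LinearMap.ker (Lmap D htot 0 1))
      (Set.Finite.image (fun lam => W ⊓ LinearMap.ker (Lmap D htot 1 lam)) hfin)))
    rintro U ⟨s, t, hst, rfl⟩
    rcases eq_or_ne s 0 with rfl | hs
    · have ht : t ≠ 0 := fun h => hst (by rw [h])
      have : LinearMap.ker (Lmap D htot 0 t) = LinearMap.ker (Lmap D htot 0 1) :=
        ker_Lmap_proportional D htot hst (by ring) (by simp)
      rw [this]
      exact Set.mem_insert_of_mem _ (Set.mem_insert _ _)
    · have hker : LinearMap.ker (Lmap D htot s t) = LinearMap.ker (Lmap D htot 1 (s⁻¹ * t)) := by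
        apply ker_Lmap_proportional D htot hst
        · field_simp; ring
        · simp
      rcases eq_or_ne (W ⊓ LinearMap.ker (Lmap D htot s t)) ⊥ with hUbot | hUbot
      · rw [hUbot]; exact Set.mem_insert _ _
      · obtain ⟨w, hwmem, hw0⟩ := Submodule.exists_mem_ne_zero_of_ne_bot hUbot
        rw [Submodule.mem_inf] at hwmem
        refine Set.mem_insert_of_mem _ (Set.mem_insert_of_mem _ ⟨s⁻¹ * t, ?_, ?_⟩)
        · have := htrans 1 (s⁻¹ * t) w hw0 hwmem.1 (by rw [← hker]; exact hwmem.2)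
          rw [one_smul] at this
          exact this
        · rw [hker]
  · -- t₁ ≠ 0; use parametrization (lam, 1)
    have hinj0 : Function.Injective ⇑(E₂ + (t₁⁻¹ * s₁) • E₁) := by
      have : E₂ + (t₁⁻¹ * s₁) • E₁ = t₁⁻¹ • (s₁ • E₁ + t₁ • E₂) := by
        rw [smul_add, smul_smul, smul_smul, inv_mul_cancel₀ ht₁, one_smul]
        exact add_comm _ _
      rw [this, hid]
      intro x y hxy
      simp only [LinearMap.smul_apply, LinearMap.id_apply] at hxy
      have := congrArg (fun z => t₁ • z) hxy
      simpa [smul_smul, mul_inv_cancel₀ ht₁] using this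
    have hfin := finite_ker_pencil E₂ E₁ (t₁⁻¹ * s₁) hinj0
    apply Set.Finite.subset (Set.Finite.insert ⊥ (Set.Finite.insert
      (W ⊓ LinearMap.ker (Lmap D htot 1 0))
      (Set.Finite.image (fun lam => W ⊓ LinearMap.ker (Lmap D htot lam 1)) hfin)))
    rintro U ⟨s, t, hst, rfl⟩
    rcases eq_or_ne t 0 with rfl | ht
    · have hs : s ≠ 0 := fun h => hst (by rw [h])
      have : LinearMap.ker (Lmap D htot s 0) = LinearMap.ker (Lmap D htot 1 0) :=
        ker_Lmap_proportional D htot hst (by ring) (by simp)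
      rw [this]
      exact Set.mem_insert_of_mem _ (Set.mem_insert _ _)
    · have hker : LinearMap.ker (Lmap D htot s t) = LinearMap.ker (Lmap D htot (t⁻¹ * s) 1) := by
        apply ker_Lmap_proportional D htot hst
        · field_simp; ring
        · simp
      rcases eq_or_ne (W ⊓ LinearMap.ker (Lmap D htot s t)) ⊥ with hUbot | hUbot
      · rw [hUbot]; exact Set.mem_insert _ _
      · obtain ⟨w, hwmem, hw0⟩ := Submodule.exists_mem_ne_zero_of_ne_bot hUbot
        rw [Submodule.mem_inf] at hwmem
        refine Set.mem_insert_of_mem _ (Set.mem_insert_of_mem _ ⟨t⁻¹ * s, ?_, ?_⟩)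
        · have := htrans (t⁻¹ * s) 1 w hw0 hwmem.1 (by rw [← hker]; exact hwmem.2)
          rw [one_smul, add_comm ((t⁻¹ * s) • E₁) E₂] at this
          exact this
        · rw [hker]

lemma key_no_good [Infinite K] (ha : ∀ i, 1 ≤ a i)
    (p : PS K N) (hpC : p ∉ D.carrier) {d : ℕ} (hd : 2 ≤ d)
    {W : Submodule K (Fin (N+1) → K)} (hWrank : Module.finrank K W = d + 1)
    (hsec : secCone D.carrier p = linSet W)
    {s₁ t₁ : K} (hst₁ : (s₁, t₁) ≠ (0, 0))
    (hbot : W ⊓ LinearMap.ker (Lmap D htot s₁ t₁) = ⊥) : False := by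
  classical
  have hpW : p.rep ∈ W := by
    have hp1 : p ∈ secCone D.carrier p := Set.mem_union_left _ rfl
    rw [hsec] at hp1
    exact mem_linSet_iff_rep.mp hp1
  have hu₀ker : ∀ s t : K, (s, t) ≠ (0, 0) → p.rep ∉ LinearMap.ker (Lmap D htot s t) := by
    intro s t hst hker
    exact hpC ((mem_carrier_iff D htot p).mpr ⟨s, t, hst, hker⟩)
  have Sfin := finite_param_kernels D htot hst₁ hbot
  by_cases hex : ∃ P ∈ Sfin.toFinset, W ≤ (K ∙ p.rep) ⊔ P
  · -- main branch: one sup contains W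
    obtain ⟨P₀, hP₀S, hle⟩ := hex
    rw [Set.Finite.mem_toFinset] at hP₀S
    obtain ⟨s₀, t₀, hst₀, hP₀eq⟩ := hP₀S
    have hP₀W : P₀ ≤ W := by rw [hP₀eq]; exact inf_le_left
    have hP₀ker : P₀ ≤ LinearMap.ker (Lmap D htot s₀ t₀) := by rw [hP₀eq]; exact inf_le_right
    have hpnotP₀ : p.rep ∉ P₀ := fun h => hu₀ker s₀ t₀ hst₀ (hP₀ker h)
    have hWsup : W = (K ∙ p.rep) ⊔ P₀ :=
      le_antisymm hle (sup_le ((Submodule.span_singleton_le_iff_mem _ _).mpr hpW) hP₀W)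
    have hinf0 : (K ∙ p.rep) ⊓ P₀ = ⊥ := span_singleton_inf_eq_bot hpnotP₀
    have hP₀rank : Module.finrank K P₀ = d := by
      have h1 := Submodule.finrank_sup_add_finrank_inf_eq (K ∙ p.rep) P₀
      rw [hinf0, ← hWsup, hWrank, finrank_span_singleton p.rep_nonzero, finrank_bot] at h1
      omega
    set T₂ : Finset (Submodule K (Fin (N+1) → K)) :=
      insert ⊥ ((Sfin.toFinset.erase P₀).image fun P => ((K ∙ p.rep) ⊔ P) ⊓ P₀) with hT₂
    have hdisj : ∀ P ∈ Sfin.toFinset.erase P₀, P ⊓ P₀ = ⊥ := by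
      intro P hP
      have hPne := Finset.ne_of_mem_erase hP
      have hPS := Finset.mem_of_mem_erase hP
      rw [Set.Finite.mem_toFinset] at hPS
      obtain ⟨s, t, hst, rfl⟩ := hPS
      by_cases hprop : s * t₀ - t * s₀ = 0
      · exact absurd (by rw [hP₀eq, ker_Lmap_proportional D htot hst hprop hst₀]) hPne
      · rw [eq_bot_iff]
        intro x hx
        rw [Submodule.mem_inf] at hx
        have h1 : x ∈ LinearMap.ker (Lmap D htot s t) := hx.1.2
        have h2 : x ∈ LinearMap.ker (Lmap D htot s₀ t₀) := hP₀ker hx.2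
        rw [Submodule.mem_bot]
        exact ker_Lmap_disjoint D htot hprop ha h1 h2
    have hT₂not : ∀ Tm ∈ T₂, ¬ P₀ ≤ Tm := by
      intro Tm hTm hle2
      have hd2 := Submodule.finrank_mono hle2
      rw [hP₀rank] at hd2
      rcases Finset.mem_insert.mp hTm with rfl | hTm
      · rw [finrank_bot] at hd2; omega
      · obtain ⟨P, hP, rfl⟩ := Finset.mem_image.mp hTm
        have hPW : P ≤ W := by
          have hPS := Finset.mem_of_mem_erase hP
          rw [Set.Finite.mem_toFinset] at hPS
          obtain ⟨s, t, hst, rfl⟩ := hPS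
          exact inf_le_left
        have hPrank : Module.finrank K P ≤ 1 := by
          have h1 := Submodule.finrank_sup_add_finrank_inf_eq P P₀
          rw [hdisj P hP, finrank_bot] at h1
          have h2 : Module.finrank K ↥(P ⊔ P₀) ≤ d + 1 := by
            rw [← hWrank]
            exact Submodule.finrank_mono (sup_le hPW hP₀W)
          omega
        have hsup1 : Module.finrank K ↥((K ∙ p.rep) ⊔ P) ≤ 1 + Module.finrank K P := by
          have h1 := Submodule.finrank_sup_add_finrank_inf_eq (K ∙ p.rep) P
          rw [finrank_span_singleton p.rep_nonzero] at h1
          omega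
        have hYinf : ((((K ∙ p.rep) ⊔ P) ⊓ P₀) ⊓ (K ∙ p.rep) : Submodule K _) = ⊥ := by
          rw [eq_bot_iff]
          exact le_trans (inf_le_inf_right _ inf_le_right)
            (le_of_eq (by rw [inf_comm, hinf0]))
        have h3 := Submodule.finrank_sup_add_finrank_inf_eq
          (((K ∙ p.rep) ⊔ P) ⊓ P₀) (K ∙ p.rep)
        rw [hYinf, finrank_bot, finrank_span_singleton p.rep_nonzero] at h3
        have h4 : Module.finrank K ↥(((((K ∙ p.rep) ⊔ P) ⊓ P₀)) ⊔ (K ∙ p.rep)) ≤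
            1 + Module.finrank K P :=
          le_trans (Submodule.finrank_mono (sup_le inf_le_left le_sup_left)) hsup1
        omega
    obtain ⟨v, hvP₀, hvnot⟩ := exists_mem_notMem P₀ T₂ hT₂not
    have hv0 : v ≠ 0 := fun h =>
      hvnot ⊥ (Finset.mem_insert_self _ _) (h ▸ Submodule.zero_mem ⊥)
    have hT₃not : ∀ Tm ∈ insert (K ∙ v) T₂, ¬ P₀ ≤ Tm := by
      intro Tm hTm
      rcases Finset.mem_insert.mp hTm with rfl | hTm
      · intro hle2
        have h1 := Submodule.finrank_mono hle2
        rw [hP₀rank, finrank_span_singleton hv0] at h1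
        omega
      · exact hT₂not Tm hTm
    obtain ⟨v', hv'P₀, hv'not⟩ := exists_mem_notMem P₀ (insert (K ∙ v) T₂) hT₃not
    have hv'0 : v' ≠ 0 := fun h =>
      hv'not ⊥ (Finset.mem_insert_of_mem (Finset.mem_insert_self _ _)) (h ▸ Submodule.zero_mem ⊥)
    have hv'nKv : v' ∉ (K ∙ v) := hv'not _ (Finset.mem_insert_self _ _)
    -- tangency consequence for generic points of P₀
    have tang : ∀ (w : Fin (N+1) → K) (hw0 : w ≠ 0), w ∈ P₀ → (∀ Tm ∈ T₂, w ∉ Tm) →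
        ∀ c e : MIdx a,
          crd D htot p.rep (fIdx c) * crd D htot w (sIdx e)
          + crd D htot w (fIdx c) * crd D htot p.rep (sIdx e)
          - crd D htot p.rep (sIdx c) * crd D htot w (fIdx e)
          - crd D htot w (sIdx c) * crd D htot p.rep (fIdx e) = 0 := by
      intro w hw0 hwP₀ hwnot c e
      have hwW : w ∈ W := hP₀W hwP₀
      have hwnp : Projectivization.mk K w hw0 ≠ p := by
        intro h
        apply hpnotP₀
        obtain ⟨cc, hcc⟩ := (Projectivization.mk_eq_mk_iff K w p.rep hw0 p.rep_nonzero).mp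
          (by rw [h, Projectivization.mk_rep])
        rw [Units.smul_def] at hcc
        have h5 : (cc : K) • p.rep ∈ P₀ := by rw [hcc]; exact hwP₀
        have h6 := Submodule.smul_mem P₀ ((cc⁻¹ : Kˣ) : K) h5
        rwa [smul_smul, Units.inv_mul, one_smul] at h6
      have hXL : ∀ z : PS K N, z ∈ D.carrier → z.rep ∈ Submodule.span K {p.rep, w} →
          z = Projectivization.mk K w hw0 := by
        intro z hzC hzs
        obtain ⟨s, t, hst, hzker⟩ := (mem_carrier_iff D htot z).mp hzC
        have hspanW : Submodule.span K {p.rep, w} ≤ W := by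
          rw [Submodule.span_le]
          rintro x (rfl | rfl)
          · exact hpW
          · exact hwW
        obtain ⟨α, β, hab⟩ := Submodule.mem_span_pair.mp hzs
        have hβ : β ≠ 0 := by
          rintro rfl
          rw [zero_smul, add_zero] at hab
          have hα : α ≠ 0 := by
            rintro rfl; rw [zero_smul] at hab; exact z.rep_nonzero hab.symm
          apply hu₀ker s t hst
          have h5 : α • p.rep ∈ LinearMap.ker (Lmap D htot s t) := by rw [hab]; exact hzker
          have h6 := Submodule.smul_mem (LinearMap.ker (Lmap D htot s t)) α⁻¹ h5
          rwa [smul_smul, inv_mul_cancel₀ hα, one_smul] at h6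
        by_cases hPP₀ : W ⊓ LinearMap.ker (Lmap D htot s t) = P₀
        · have hzP₀ : z.rep ∈ P₀ := by
            rw [← hPP₀]
            exact Submodule.mem_inf.mpr ⟨hspanW hzs, hzker⟩
          have hα : α = 0 := by
            by_contra hα
            apply hpnotP₀
            have h5 : α • p.rep = z.rep - β • w := by rw [← hab, add_sub_cancel_right]
            have h6 : α • p.rep ∈ P₀ := by
              rw [h5]; exact Submodule.sub_mem _ hzP₀ (Submodule.smul_mem _ _ hwP₀)
            have h7 := Submodule.smul_mem P₀ α⁻¹ h6
            rwa [smul_smul, inv_mul_cancel₀ hα, one_smul] at h7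
          rw [hα, zero_smul, zero_add] at hab
          rw [← z.mk_rep, Projectivization.mk_eq_mk_iff]
          exact ⟨Units.mk0 β hβ, hab⟩
        · exfalso
          have hPSset : W ⊓ LinearMap.ker (Lmap D htot s t) ∈ Sfin.toFinset.erase P₀ := by
            rw [Finset.mem_erase]
            exact ⟨hPP₀, (Set.Finite.mem_toFinset _).mpr ⟨s, t, hst, rfl⟩⟩
          apply hwnot (((K ∙ p.rep) ⊔ (W ⊓ LinearMap.ker (Lmap D htot s t))) ⊓ P₀)
            (Finset.mem_insert_of_mem (Finset.mem_image_of_mem _ hPSset))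
          refine Submodule.mem_inf.mpr ⟨?_, hwP₀⟩
          have hz2 : z.rep ∈ (K ∙ p.rep) ⊔ (W ⊓ LinearMap.ker (Lmap D htot s t)) :=
            Submodule.mem_sup_right (Submodule.mem_inf.mpr ⟨hspanW hzs, hzker⟩)
          have h5 : β • w = z.rep - α • p.rep := by rw [← hab, add_sub_cancel_left]
          have h6 : β • w ∈ (K ∙ p.rep) ⊔ (W ⊓ LinearMap.ker (Lmap D htot s t)) := by
            rw [h5]
            exact Submodule.sub_mem _ hz2 (Submodule.smul_mem _ _
              (Submodule.mem_sup_left (Submodule.mem_span_singleton_self _)))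
          have h7 := Submodule.smul_mem _ β⁻¹ h6
          rwa [smul_smul, inv_mul_cancel₀ hβ, one_smul] at h7
      rcases secant_line_at D hsec hw0 hwW hwnp with
        ⟨x, y, hxC, hyC, hxy, hxs, hys⟩ | ⟨z, hzC, hzs, htanp⟩
      · exact absurd ((hXL x hxC hxs).trans (hXL y hyC hys).symm) hxy
      · have hz := hXL z hzC hzs
        rw [hz] at htanp
        have hmin := htanp (minorPoly D htot c e) (minorPoly_vanishing D htot c e)
        obtain ⟨cu, hcu⟩ := Projectivization.exists_smul_eq_mk_rep K w hw0
        rw [Units.smul_def] at hcu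
        rw [sum_pderiv_minor D htot p.rep ((Projectivization.mk K w hw0).rep) c e] at hmin
        rw [← hcu] at hmin
        simp only [crd_smul] at hmin
        have hcu0 : (cu : K) ≠ 0 := Units.ne_zero cu
        apply mul_left_cancel₀ hcu0
        rw [mul_zero]
        linear_combination hmin
    -- γ construction
    have hgam : ∀ w, w ∈ P₀ → ∃ γ : MIdx a → K,
        ∀ c, crd D htot w (fIdx c) = γ c * s₀ ∧ crd D htot w (sIdx c) = γ c * t₀ := by
      intro w hw
      have hker0 : ∀ c : MIdx a,
          t₀ * crd D htot w (fIdx c) = s₀ * crd D htot w (sIdx c) :=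
        (mem_ker_Lmap_iff D htot).mp (hP₀ker hw)
      rcases eq_or_ne s₀ 0 with rfl | hs₀
      · have ht₀ : t₀ ≠ 0 := fun h => hst₀ (by rw [h])
        refine ⟨fun c => crd D htot w (sIdx c) / t₀, fun c => ⟨?_, by field_simp⟩⟩
        have h2 := hker0 c
        rw [zero_mul] at h2
        have h1 : crd D htot w (fIdx c) = 0 := (mul_eq_zero.mp h2).resolve_left ht₀
        rw [h1, mul_zero]
      · refine ⟨fun c => crd D htot w (fIdx c) / s₀, fun c => ⟨by field_simp, ?_⟩⟩
        have h2 := hker0 c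
        field_simp
        linear_combination -h2
    obtain ⟨γv, hγv⟩ := hgam v hvP₀
    obtain ⟨γv', hγv'⟩ := hgam v' hv'P₀
    have hlamd : ∃ d₁ : MIdx a,
        t₀ * crd D htot p.rep (fIdx d₁) - s₀ * crd D htot p.rep (sIdx d₁) ≠ 0 := by
      by_contra hcon2
      push_neg at hcon2
      apply hu₀ker s₀ t₀ hst₀
      rw [mem_ker_Lmap_iff D htot]
      intro c
      exact sub_eq_zero.mp (hcon2 c)
    obtain ⟨d₁, hd₁⟩ := hlamd
    have hrel : ∀ (w : Fin (N+1) → K) (γ : MIdx a → K),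
        (∀ c, crd D htot w (fIdx c) = γ c * s₀ ∧ crd D htot w (sIdx c) = γ c * t₀) →
        (∀ c e : MIdx a,
          crd D htot p.rep (fIdx c) * crd D htot w (sIdx e)
          + crd D htot w (fIdx c) * crd D htot p.rep (sIdx e)
          - crd D htot p.rep (sIdx c) * crd D htot w (fIdx e)
          - crd D htot w (sIdx c) * crd D htot p.rep (fIdx e) = 0) →
        ∀ c, γ c * (t₀ * crd D htot p.rep (fIdx d₁) - s₀ * crd D htot p.rep (sIdx d₁))
          = γ d₁ * (t₀ * crd D htot p.rep (fIdx c) - s₀ * crd D htot p.rep (sIdx c)) := by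
      intro w γ hγ htang c
      have h := htang c d₁
      rw [(hγ c).1, (hγ c).2, (hγ d₁).1, (hγ d₁).2] at h
      linear_combination -h
    have hrelv := hrel v γv hγv (tang v hv0 hvP₀ hvnot)
    have hrelv' := hrel v' γv' hγv'
      (tang v' hv'0 hv'P₀ (fun Tm hTm => hv'not Tm (Finset.mem_insert_of_mem hTm)))
    have hγvd₁ : γv d₁ ≠ 0 := by
      intro h0
      apply hv0
      apply eq_zero_of_crd_eq_zero D htot
      intro q
      have hz : ∀ c, γv c = 0 := by
        intro c
        have h1 := hrelv c
        rw [h0, zero_mul] at h1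
        exact (mul_eq_zero.mp h1).resolve_right hd₁
      rcases idx_cover ha q with ⟨c, rfl⟩ | ⟨c, rfl⟩
      · rw [(hγv c).1, hz c, zero_mul]
      · rw [(hγv c).2, hz c, zero_mul]
    apply hv'nKv
    rw [Submodule.mem_span_singleton]
    refine ⟨(γv d₁)⁻¹ * γv' d₁, ?_⟩
    have hfin : γv d₁ • v' = γv' d₁ • v := by
      apply crd_ext D htot
      intro q
      rw [crd_smul, crd_smul]
      rcases idx_cover ha q with ⟨c, rfl⟩ | ⟨c, rfl⟩
      · rw [(hγv c).1, (hγv' c).1]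
        apply mul_left_cancel₀ hd₁
        linear_combination (γv d₁ * s₀) * hrelv' c - (γv' d₁ * s₀) * hrelv c
      · rw [(hγv c).2, (hγv' c).2]
        apply mul_left_cancel₀ hd₁
        linear_combination (γv d₁ * t₀) * hrelv' c - (γv' d₁ * t₀) * hrelv c
    calc ((γv d₁)⁻¹ * γv' d₁) • v = (γv d₁)⁻¹ • (γv' d₁ • v) := by rw [smul_smul]
      _ = (γv d₁)⁻¹ • (γv d₁ • v') := by rw [← hfin]
      _ = v' := by rw [smul_smul, inv_mul_cancel₀ hγvd₁, one_smul]
  · -- covering branch: no sup contains W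
    set T : Finset (Submodule K (Fin (N+1) → K)) :=
      insert (K ∙ p.rep) (Sfin.toFinset.image fun P => (K ∙ p.rep) ⊔ P) with hT
    have hTnot : ∀ Tm ∈ T, ¬ W ≤ Tm := by
      intro Tm hTm hle
      rcases Finset.mem_insert.mp hTm with rfl | hTm
      · have h1 := Submodule.finrank_mono hle
        rw [hWrank, finrank_span_singleton p.rep_nonzero] at h1
        omega
      · obtain ⟨P, hP, rfl⟩ := Finset.mem_image.mp hTm
        exact hex ⟨P, hP, hle⟩
    obtain ⟨v, hvW, hvnot⟩ := exists_mem_notMem W T hTnot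
    have hvKU : v ∉ (K ∙ p.rep) := hvnot _ (Finset.mem_insert_self _ _)
    have hv0 : v ≠ 0 := fun h => hvKU (h ▸ Submodule.zero_mem _)
    have hvnp : Projectivization.mk K v hv0 ≠ p := by
      intro h
      apply hvKU
      obtain ⟨cc, hcc⟩ := (Projectivization.mk_eq_mk_iff K v p.rep hv0 p.rep_nonzero).mp
        (by rw [h, Projectivization.mk_rep])
      rw [Units.smul_def] at hcc
      rw [← hcc]
      exact Submodule.smul_mem _ _ (Submodule.mem_span_singleton_self _)
    have hzs : ∃ z : PS K N, z ∈ D.carrier ∧ z.rep ∈ Submodule.span K {p.rep, v} := by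
      rcases secant_line_at D hsec hv0 hvW hvnp with
        ⟨x, y, hx, _, _, hxs, _⟩ | ⟨z, hz, hzs, _⟩
      · exact ⟨x, hx, hxs⟩
      · exact ⟨z, hz, hzs⟩
    obtain ⟨z, hzC, hzspan⟩ := hzs
    obtain ⟨s, t, hst, hzker⟩ := (mem_carrier_iff D htot z).mp hzC
    have hspanW : Submodule.span K {p.rep, v} ≤ W := by
      rw [Submodule.span_le]
      rintro x (rfl | rfl)
      · exact hpW
      · exact hvW
    have hzW : z.rep ∈ W := hspanW hzspan
    obtain ⟨α, β, hab⟩ := Submodule.mem_span_pair.mp hzspan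
    have hβ : β ≠ 0 := by
      rintro rfl
      rw [zero_smul, add_zero] at hab
      have hα : α ≠ 0 := by
        rintro rfl; rw [zero_smul] at hab; exact z.rep_nonzero hab.symm
      apply hu₀ker s t hst
      have h5 : α • p.rep ∈ LinearMap.ker (Lmap D htot s t) := by rw [hab]; exact hzker
      have h6 := Submodule.smul_mem (LinearMap.ker (Lmap D htot s t)) α⁻¹ h5
      rwa [smul_smul, inv_mul_cancel₀ hα, one_smul] at h6
    have hTmem : (K ∙ p.rep) ⊔ (W ⊓ LinearMap.ker (Lmap D htot s t)) ∈ T := by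
      apply Finset.mem_insert_of_mem
      apply Finset.mem_image_of_mem
      rw [Set.Finite.mem_toFinset]
      exact ⟨s, t, hst, rfl⟩
    apply hvnot _ hTmem
    have hz2 : z.rep ∈ (K ∙ p.rep) ⊔ (W ⊓ LinearMap.ker (Lmap D htot s t)) :=
      Submodule.mem_sup_right (Submodule.mem_inf.mpr ⟨hzW, hzker⟩)
    have h5 : β • v = z.rep - α • p.rep := by rw [← hab, add_sub_cancel_left]
    have h6 : β • v ∈ (K ∙ p.rep) ⊔ (W ⊓ LinearMap.ker (Lmap D htot s t)) := by
      rw [h5]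
      exact Submodule.sub_mem _ hz2 (Submodule.smul_mem _ _
        (Submodule.mem_sup_left (Submodule.mem_span_singleton_self _)))
    have h7 := Submodule.smul_mem _ β⁻¹ h6
    rwa [smul_smul, inv_mul_cancel₀ hβ, one_smul] at h7

end ScrollData


end SecantLoci

/-! ## Statement 1: the secant locus surjects onto `ℙ¹` when `dim Sec_p(X̃) ≥ 2` -/

namespace SecantLoci

/-- If `X̃` is a smooth rational normal scroll of codimension at least 2 and
`p ∈ Sec(X̃) \ X̃` with `dim Sec_p(X̃) ≥ 2`, then `Σ_p(X̃)` meets every ruling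
(i.e. `φ` restricted to `Σ_p(X̃)` is surjective); in particular `Σ_p(X̃)` is not
contained in any single ruling. -/
theorem secant_locus_meets_every_ruling {K : Type*} [Field K] [IsAlgClosed K]
    {N n : ℕ} {a : Fin n → ℕ}
    (D : ScrollData K N n a) (ha : ∀ i, 1 ≤ a i)
    (htot : N + 1 = ∑ i, (a i + 1)) (hcodim : n + 2 ≤ N)
    (p : PS K N) (hp : p ∈ secVariety D.carrier \ D.carrier)
    (d : ℕ) (hd : 2 ≤ d) (hdim : IsLinearOfDim (secCone D.carrier p) d) :
    (∀ s t : K, (s, t) ≠ (0, 0) →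
        (secLocus D.carrier p ∩ D.ruling s t).Nonempty) ∧
      ∀ s t : K, (s, t) ≠ (0, 0) → ¬ secLocus D.carrier p ⊆ D.ruling s t := by
  classical
  obtain ⟨W, hWrank, hWeq⟩ := hdim
  have hkey : ∀ s t : K, (s, t) ≠ (0, 0) →
      W ⊓ LinearMap.ker (ScrollData.Lmap D htot s t) ≠ ⊥ := by
    intro s t hst hbot
    exact ScrollData.key_no_good D htot ha p hp.2 hd hWrank hWeq hst hbot
  have main : ∀ s t : K, (s, t) ≠ (0, 0) →
      ∃ x : PS K N, x ∈ secLocus D.carrier p ∩ D.ruling s t := by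
    intro s t hst
    obtain ⟨w, hwmem, hw0⟩ := Submodule.exists_mem_ne_zero_of_ne_bot (hkey s t hst)
    rw [Submodule.mem_inf] at hwmem
    obtain ⟨cu, hcu⟩ := Projectivization.exists_smul_eq_mk_rep K w hw0
    rw [Units.smul_def] at hcu
    have hrepker : (Projectivization.mk K w hw0).rep ∈
        LinearMap.ker (ScrollData.Lmap D htot s t) := by
      rw [← hcu]; exact Submodule.smul_mem _ _ hwmem.2
    have hrepW : (Projectivization.mk K w hw0).rep ∈ W := by
      rw [← hcu]; exact Submodule.smul_mem _ _ hwmem.1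
    refine ⟨Projectivization.mk K w hw0, ⟨?_, ?_⟩, ?_⟩
    · exact (ScrollData.mem_carrier_iff D htot _).mpr ⟨s, t, hst, hrepker⟩
    · rw [hWeq]
      exact mem_linSet_iff_rep.mpr hrepW
    · exact (ScrollData.mem_ruling_iff D htot hst _).mpr hrepker
  constructor
  · intro s t hst
    obtain ⟨x, hx⟩ := main s t hst
    exact ⟨x, hx⟩
  · intro s t hst hsub
    obtain ⟨s', t', hst', hcross⟩ : ∃ s' t' : K, (s', t') ≠ (0, 0) ∧ s' * t - t' * s ≠ 0 := by
      rcases eq_or_ne s 0 with rfl | hs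
      · have ht : t ≠ 0 := fun h => hst (by rw [h])
        exact ⟨1, 0, by simp, by simpa using ht⟩
      · exact ⟨0, 1, by simp, by simpa using hs⟩
    obtain ⟨x, hxL, hxR⟩ := main s' t' hst'
    have hx1 : x.rep ∈ LinearMap.ker (ScrollData.Lmap D htot s' t') :=
      (ScrollData.mem_ruling_iff D htot hst' x).mp hxR
    have hx2 : x.rep ∈ LinearMap.ker (ScrollData.Lmap D htot s t) :=
      (ScrollData.mem_ruling_iff D htot hst x).mp (hsub hxL)
    exact x.rep_nonzero (ScrollData.ker_Lmap_disjoint D htot hcross ha hx1 hx2)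


end SecantLoci
end
end

section
/- Let X̃ ⊆ P^{r+1} be a smooth rational normal scroll of codimension at least 2 and let p ∈ Sec(X̃) \ X̃ be a closed point with Sec_p(X̃) = P^{t−1} for some t ≥ 3. Then the hyperquadric Σ_p(X̃) ⊆ P^{t−1} is not a double linear space; that is, there is no linear subspace E ⊆ P^{t−1} of dimension t−2 with Σ_p(X̃) = 2E. -/
/-!
Common framework: projective space over an algebraically closed field, linear
subspaces, Zariski closure, tangent spaces, secant cones and secant loci,
rational normal scrolls (possibly cones) and their distinguished subvarieties.
-/

open Projectivization MvPolynomial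

noncomputable section

namespace SecantLoci

variable {K : Type*} [Field K] {N : ℕ}

namespace Aux
variable {n : ℕ} {a : Fin n → ℕ}
abbrev Idx (a : Fin n → ℕ) := (i : Fin n) × Fin (a i + 1)
variable (B : Module.Basis (Idx a) K (Fin (N + 1) → K))
def cc (y : Fin (N + 1) → K) (i : Fin n) (j : ℕ) : K :=
  if h : j ≤ a i then B.repr y ⟨i, ⟨j, by omega⟩⟩ else 0
lemma cc_apply (y : Fin (N + 1) → K) (i : Fin n) (j : ℕ) (hj : j ≤ a i) :
    cc B y i j = B.repr y ⟨i, ⟨j, by omega⟩⟩ := dif_pos hj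
lemma cc_add (y z : Fin (N + 1) → K) (i : Fin n) (j : ℕ) :
    cc B (y + z) i j = cc B y i j + cc B z i j := by unfold cc; split <;> simp
lemma cc_smul (k : K) (y : Fin (N + 1) → K) (i : Fin n) (j : ℕ) :
    cc B (k • y) i j = k * cc B y i j := by unfold cc; split <;> simp
lemma cc_zero (i : Fin n) (j : ℕ) : cc B (0 : Fin (N + 1) → K) i j = 0 := by
  unfold cc; split <;> simp
lemma eq_of_cc {y z : Fin (N + 1) → K}
    (h : ∀ (i : Fin n) (j : ℕ) (_ : j ≤ a i), cc B y i j = cc B z i j) : y = z := by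
  refine B.ext_elem_iff.2 fun σ => ?_
  obtain ⟨i, j⟩ := σ
  have hj : (j : ℕ) ≤ a i := by omega
  have := h i j hj
  rw [cc_apply B y i j hj, cc_apply B z i j hj] at this
  simpa using this
lemma cc_sumCoef (f : Idx a → K) (i : Fin n) (j : ℕ) (hj : j ≤ a i) :
    cc B (∑ σ, f σ • B σ) i j = f ⟨i, ⟨j, by omega⟩⟩ := by
  rw [cc_apply B _ i j hj, map_sum, Finset.sum_apply']
  rw [Finset.sum_eq_single (⟨i, ⟨j, by omega⟩⟩ : Idx a)]
  · simp
  · intro σ _ hσ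
    simp [Module.Basis.repr_self, Finsupp.single_apply, hσ]
  · simp

variable (D : ScrollData K N n a)

lemma cc_sum {ι : Type*} (s : Finset ι) (f : ι → (Fin (N + 1) → K)) (i : Fin n) (j : ℕ) :
    cc B (∑ x ∈ s, f x) i j = ∑ x ∈ s, cc B (f x) i j := by
  unfold cc
  split
  · rw [map_sum, Finset.sum_apply']
  · simp

lemma cc_w (hB : ∀ i j, B ⟨i, j⟩ = D.v i j) (s t : K) (i i' : Fin n) (j : ℕ) (hj : j ≤ a i) :
    cc B (D.w i' s t) i j = if i = i' then s ^ (a i - j) * t ^ j else 0 := by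
  have hw : D.w i' s t = ∑ j' : Fin (a i' + 1), (s ^ (a i' - (j' : ℕ)) * t ^ (j' : ℕ)) • B ⟨i', j'⟩ := by
    unfold ScrollData.w; simp_rw [hB]
  rw [cc_apply B _ i j hj, hw, map_sum, Finset.sum_apply']
  by_cases hii : i = i'
  · subst hii
    rw [Finset.sum_eq_single (⟨j, by omega⟩ : Fin (a i + 1))]
    · simp
    · intro j' _ hj'
      have : (⟨i, j'⟩ : Idx a) ≠ ⟨i, ⟨j, by omega⟩⟩ := by
        simp only [ne_eq, Sigma.mk.inj_iff, heq_eq_eq, true_and]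
        exact hj'
      simp [Module.Basis.repr_self, Finsupp.single_apply, this]
    · simp
  · rw [Finset.sum_eq_zero, if_neg hii]
    intro j' _
    have : (⟨i', j'⟩ : Idx a) ≠ ⟨i, ⟨j, by omega⟩⟩ := by
      simp only [ne_eq, Sigma.mk.inj_iff]
      tauto
    simp [Module.Basis.repr_self, Finsupp.single_apply, this]

lemma cc_sum_w (hB : ∀ i j, B ⟨i, j⟩ = D.v i j) (c : Fin n → K) (s t : K) (i : Fin n) (j : ℕ)
    (hj : j ≤ a i) :
    cc B (∑ i', c i' • D.w i' s t) i j = c i * (s ^ (a i - j) * t ^ j) := by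
  rw [cc_sum]
  rw [Finset.sum_eq_single i]
  · rw [cc_smul, cc_w B D hB s t i i j hj, if_pos rfl]
  · intro i' _ hi'
    rw [cc_smul, cc_w B D hB s t i i' j hj, if_neg (Ne.symm hi'), mul_zero]
  · simp

lemma mem_ruling_of_cc (hB : ∀ i j, B ⟨i, j⟩ = D.v i j) (c : Fin n → K) (s t : K)
    (y : Fin (N + 1) → K)
    (h : ∀ (i : Fin n) (j : ℕ) (_ : j ≤ a i), cc B y i j = c i * (s ^ (a i - j) * t ^ j)) :
    y ∈ Submodule.span K (Set.range fun i => D.w i s t) := by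
  have hy : y = ∑ i', c i' • D.w i' s t := by
    refine eq_of_cc B fun i j hj => ?_
    rw [h i j hj, cc_sum_w B D hB c s t i j hj]
  rw [hy]
  exact Submodule.sum_mem _ fun i _ => Submodule.smul_mem _ _
    (Submodule.subset_span (Set.mem_range_self i))


lemma w_proportional (s t s' t' : K) (hcross : s * t' - t * s' = 0)
    (hst : (s, t) ≠ (0, 0)) (hst' : (s', t') ≠ (0, 0)) :
    Submodule.span K (Set.range fun i => D.w i s' t') =
      Submodule.span K (Set.range fun i => D.w i s t) := by
  have hprop : ∃ ρ : K, ρ ≠ 0 ∧ s' = ρ * s ∧ t' = ρ * t := by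
    by_cases hs : s = 0
    · have ht : t ≠ 0 := fun h0 => hst (by rw [hs, h0])
      have hs'0 : s' = 0 := by
        have h1 : t * s' = 0 := by linear_combination -hcross + t' * hs
        exact (mul_eq_zero.1 h1).resolve_left ht
      have ht' : t' ≠ 0 := fun h0 => hst' (by rw [hs'0, h0])
      refine ⟨t' / t, div_ne_zero ht' ht, by rw [hs, hs'0, mul_zero], by field_simp⟩
    · have hs'eq : s' = s' / s * s := by field_simp
      have ht'eq : t' = s' / s * t := by
        field_simp
        linear_combination hcross
      by_cases hz : s' / s = 0
      · have hs'0 : s' = 0 := by rw [hs'eq, hz, zero_mul]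
        have ht'0 : t' = 0 := by rw [ht'eq, hz, zero_mul]
        exact absurd (by rw [hs'0, ht'0]) hst'
      · exact ⟨s' / s, hz, hs'eq, ht'eq⟩
  obtain ⟨ρ, hρ, hs', ht'⟩ := hprop
  have hw : ∀ i, D.w i s' t' = ρ ^ (a i) • D.w i s t := by
    intro i
    unfold ScrollData.w
    rw [Finset.smul_sum]
    refine Finset.sum_congr rfl fun j _ => ?_
    rw [hs', ht', smul_smul]
    congr 1
    rw [mul_pow, mul_pow]
    have hpow : ρ ^ (a i - (j : ℕ)) * ρ ^ (j : ℕ) = ρ ^ (a i) := by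
      rw [← pow_add]; congr 1; omega
    calc ρ ^ (a i - (j:ℕ)) * s ^ (a i - (j:ℕ)) * (ρ ^ (j:ℕ) * t ^ (j:ℕ))
        = ρ ^ (a i - (j:ℕ)) * ρ ^ (j:ℕ) * (s ^ (a i - (j:ℕ)) * t ^ (j:ℕ)) := by ring
      _ = ρ ^ (a i) * (s ^ (a i - (j:ℕ)) * t ^ (j:ℕ)) := by rw [hpow]
  apply le_antisymm
  · rw [Submodule.span_le]
    rintro _ ⟨i, rfl⟩
    show D.w i s' t' ∈ _
    rw [hw i]
    exact Submodule.smul_mem _ _ (Submodule.subset_span (Set.mem_range_self i))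
  · rw [Submodule.span_le]
    rintro _ ⟨i, rfl⟩
    show D.w i s t ∈ _
    have : D.w i s t = (ρ ^ (a i))⁻¹ • D.w i s' t' := by
      rw [hw i, smul_smul, inv_mul_cancel₀ (pow_ne_zero _ hρ), one_smul]
    rw [this]
    exact Submodule.smul_mem _ _ (Submodule.subset_span (Set.mem_range_self i))

lemma ruling_disjoint (hB : ∀ i j, B ⟨i, j⟩ = D.v i j) (ha : ∀ i, 1 ≤ a i)
    {s t s' t' : K} (hcross : s * t' - t * s' ≠ 0) {y : Fin (N + 1) → K}
    (h1 : y ∈ Submodule.span K (Set.range fun i => D.w i s t))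
    (h2 : y ∈ Submodule.span K (Set.range fun i => D.w i s' t')) : y = 0 := by
  obtain ⟨c, hc⟩ := (Submodule.mem_span_range_iff_exists_fun K).1 h1
  obtain ⟨c', hc'⟩ := (Submodule.mem_span_range_iff_exists_fun K).1 h2
  have hcc : ∀ (i : Fin n) (j : ℕ) (_ : j ≤ a i), cc B y i j = c i * (s ^ (a i - j) * t ^ j) :=
    fun i j hj => by rw [← hc, cc_sum_w B D hB c s t i j hj]
  have hcc' : ∀ (i : Fin n) (j : ℕ) (_ : j ≤ a i), cc B y i j = c' i * (s' ^ (a i - j) * t' ^ j) :=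
    fun i j hj => by rw [← hc', cc_sum_w B D hB c' s' t' i j hj]
  -- key: c i * s^(a i - 1 - j) * t^j = 0 for all j ≤ a i - 1
  have key : ∀ (i : Fin n) (j : ℕ) (_ : j + 1 ≤ a i), c i * (s ^ (a i - 1 - j) * t ^ j) = 0 := by
    intro i j hj
    have e1 : t' * cc B y i j - s' * cc B y i (j + 1) =
        c i * (s ^ (a i - 1 - j) * t ^ j) * (s * t' - t * s') := by
      rw [hcc i j (by omega), hcc i (j+1) (by omega)]
      have h1' : s ^ (a i - j) = s * s ^ (a i - 1 - j) := by
        rw [← pow_succ']; congr 1; omega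
      have h2' : t ^ (j + 1) = t * t ^ j := by rw [pow_succ']
      rw [h1', h2', show a i - (j + 1) = a i - 1 - j from by omega]
      ring
    have e2 : t' * cc B y i j - s' * cc B y i (j + 1) = 0 := by
      rw [hcc' i j (by omega), hcc' i (j+1) (by omega)]
      have h1' : s' ^ (a i - j) = s' * s' ^ (a i - 1 - j) := by
        rw [← pow_succ']; congr 1; omega
      have h2' : t' ^ (j + 1) = t' * t' ^ j := by rw [pow_succ']
      rw [h1', h2', show a i - (j + 1) = a i - 1 - j from by omega]
      ring
    rw [e2] at e1
    rcases mul_eq_zero.1 e1.symm with h | h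
    · exact h
    · exact absurd h hcross
  refine eq_of_cc B fun i j hj => ?_
  rw [cc_zero, hcc i j hj]
  rcases Nat.lt_or_ge j (a i) with hlt | hge
  · have h1' : s ^ (a i - j) = s * s ^ (a i - 1 - j) := by
      rw [← pow_succ']; congr 1; omega
    rw [h1']
    have := key i j (by omega)
    calc c i * (s * s ^ (a i - 1 - j) * t ^ j) = s * (c i * (s ^ (a i - 1 - j) * t ^ j)) := by ring
      _ = 0 := by rw [this]; ring
  · -- j = a i
    have hje : j = a i := by omega
    have := key i (a i - 1) (by have := ha i; omega)
    have hz : c i * t ^ (a i - 1) = 0 := by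
      have hexp : a i - 1 - (a i - 1) = 0 := by omega
      rw [hexp, pow_zero, one_mul] at this
      exact this
    subst hje
    have hexp0 : a i - a i = 0 := by omega
    rw [hexp0, pow_zero, one_mul]
    have ht : t ^ (a i) = t ^ (a i - 1) * t := by
      rw [← pow_succ]; congr 1; have := ha i; omega
    rw [ht]
    calc c i * (t ^ (a i - 1) * t) = (c i * t ^ (a i - 1)) * t := by ring
      _ = 0 := by rw [hz]; ring

section Membership

lemma mem_linSet_iff (W : Submodule K (Fin (N + 1) → K)) (x : PS K N) :
    x ∈ linSet W ↔ x.rep ∈ W := by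
  unfold linSet
  rw [Set.mem_setOf_eq, Projectivization.submodule_eq, Submodule.span_singleton_le_iff_mem]

lemma mem_carrier_iff (D : ScrollData K N n a) (x : PS K N) :
    x ∈ D.carrier ↔ ∃ s t : K, (s, t) ≠ (0, 0) ∧
      x.rep ∈ Submodule.span K (Set.range fun i => D.w i s t) := by
  unfold ScrollData.carrier ScrollData.ruling
  simp only [Set.mem_iUnion]
  constructor
  · rintro ⟨s, t, hst, hx⟩
    exact ⟨s, t, hst, (mem_linSet_iff _ _).1 hx⟩
  · rintro ⟨s, t, hst, hx⟩
    exact ⟨s, t, hst, (mem_linSet_iff _ _).2 hx⟩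

lemma mk_mem_carrier (D : ScrollData K N n a) {y : Fin (N + 1) → K} (hy : y ≠ 0)
    (s t : K) (hst : (s, t) ≠ (0, 0))
    (h : y ∈ Submodule.span K (Set.range fun i => D.w i s t)) :
    Projectivization.mk K y hy ∈ D.carrier := by
  unfold ScrollData.carrier ScrollData.ruling
  simp only [Set.mem_iUnion]
  refine ⟨s, t, hst, ?_⟩
  unfold linSet
  rw [Set.mem_setOf_eq, Projectivization.submodule_mk, Submodule.span_singleton_le_iff_mem]
  exact h

lemma span_of_mk_mem_carrier (D : ScrollData K N n a) {y : Fin (N + 1) → K} (hy : y ≠ 0)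
    (h : Projectivization.mk K y hy ∈ D.carrier) :
    ∃ s t : K, (s, t) ≠ (0, 0) ∧ y ∈ Submodule.span K (Set.range fun i => D.w i s t) := by
  unfold ScrollData.carrier ScrollData.ruling at h
  simp only [Set.mem_iUnion] at h
  obtain ⟨s, t, hst, hx⟩ := h
  unfold linSet at hx
  rw [Set.mem_setOf_eq, Projectivization.submodule_mk, Submodule.span_singleton_le_iff_mem] at hx
  exact ⟨s, t, hst, hx⟩

end Membership

section Quadrics

def lp (φ : Module.Dual K (Fin (N + 1) → K)) : MvPolynomial (Fin (N + 1)) K :=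
  ∑ k, C (φ fun j => if k = j then 1 else 0) * X k

lemma eval_lp (φ : Module.Dual K (Fin (N + 1) → K)) (y : Fin (N + 1) → K) :
    eval y (lp φ) = φ y := by
  rw [LinearMap.pi_apply_eq_sum_univ φ y]
  unfold lp
  rw [map_sum]
  refine Finset.sum_congr rfl fun k _ => ?_
  simp [smul_eq_mul, mul_comm]

lemma pderiv_lp (k : Fin (N + 1)) (φ : Module.Dual K (Fin (N + 1) → K)) :
    pderiv k (lp φ) = C (φ fun j => if k = j then 1 else 0) := by
  unfold lp
  rw [map_sum, Finset.sum_eq_single k]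
  · simp
  · intro k' _ hk'
    rw [pderiv_C_mul, pderiv_X, Pi.single_eq_of_ne hk', mul_zero]
  · simp

lemma sum_mul_dual (φ : Module.Dual K (Fin (N + 1) → K)) (pv : Fin (N + 1) → K) :
    ∑ k, pv k * φ (fun j => if k = j then 1 else 0) = φ pv := by
  rw [LinearMap.pi_apply_eq_sum_univ φ pv]
  simp [smul_eq_mul]

lemma tang_eval (φ1 φ2 φ3 φ4 : Module.Dual K (Fin (N + 1) → K)) (pv y : Fin (N + 1) → K) :
    ∑ k, pv k * eval y (pderiv k (lp φ1 * lp φ2 - lp φ3 * lp φ4)) =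
      φ1 pv * φ2 y + φ1 y * φ2 pv - (φ3 pv * φ4 y + φ3 y * φ4 pv) := by
  have h : ∀ k, eval y (pderiv k (lp φ1 * lp φ2 - lp φ3 * lp φ4)) =
      (φ1 fun j => if k = j then 1 else 0) * φ2 y + φ1 y * (φ2 fun j => if k = j then 1 else 0)
      - ((φ3 fun j => if k = j then 1 else 0) * φ4 y
        + φ3 y * (φ4 fun j => if k = j then 1 else 0)) := by
    intro k
    rw [map_sub, pderiv_mul, pderiv_mul, pderiv_lp, pderiv_lp, pderiv_lp, pderiv_lp]
    simp only [map_sub, map_add, map_mul, eval_C, eval_lp]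
  simp_rw [h, mul_sub, mul_add]
  rw [Finset.sum_sub_distrib, Finset.sum_add_distrib, Finset.sum_add_distrib]
  congr 1
  · congr 1
    · rw [← sum_mul_dual φ1 pv, Finset.sum_mul]
      exact Finset.sum_congr rfl fun k _ => by ring
    · rw [← sum_mul_dual φ2 pv, Finset.mul_sum]
      exact Finset.sum_congr rfl fun k _ => by ring
  · congr 1
    · rw [← sum_mul_dual φ3 pv, Finset.sum_mul]
      exact Finset.sum_congr rfl fun k _ => by ring
    · rw [← sum_mul_dual φ4 pv, Finset.mul_sum]
      exact Finset.sum_congr rfl fun k _ => by ring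

variable (B : Module.Basis (Idx a) K (Fin (N + 1) → K))

/-- The coordinate functional of block `i`, position `j` (junk `0` if `j > a i`). -/
def co (i : Fin n) (j : ℕ) : Module.Dual K (Fin (N + 1) → K) :=
  if h : j ≤ a i then B.coord ⟨i, ⟨j, by omega⟩⟩ else 0

lemma co_apply (i : Fin n) (j : ℕ) (y : Fin (N + 1) → K) : co B i j y = cc B y i j := by
  unfold co cc
  split
  · rw [Module.Basis.coord_apply]
  · simp

lemma quad_vanish (D : ScrollData K N n a) (hB : ∀ i j, B ⟨i, j⟩ = D.v i j)
    (i i' : Fin n) (j j' : ℕ) (hj : j < a i) (hj' : j' < a i') :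
    (lp (co B i j) * lp (co B i' (j' + 1)) - lp (co B i (j + 1)) * lp (co B i' j'))
      ∈ vanishing D.carrier := by
  intro y hy
  by_cases h0 : y = 0
  · subst h0
    rw [map_sub, map_mul, map_mul, eval_lp, eval_lp, eval_lp, eval_lp]
    simp [co_apply, cc_zero]
  · obtain ⟨s, t, hst, hspan⟩ := span_of_mk_mem_carrier D h0 (hy h0)
    obtain ⟨c, hc⟩ := (Submodule.mem_span_range_iff_exists_fun K).1 hspan
    have hcc : ∀ (i₀ : Fin n) (j₀ : ℕ) (_ : j₀ ≤ a i₀),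
        cc B y i₀ j₀ = c i₀ * (s ^ (a i₀ - j₀) * t ^ j₀) :=
      fun i₀ j₀ hj₀ => by rw [← hc, cc_sum_w B D hB c s t i₀ j₀ hj₀]
    simp only [map_sub, map_mul, eval_lp, co_apply]
    rw [hcc i j (by omega), hcc i (j+1) (by omega), hcc i' j' (by omega),
      hcc i' (j'+1) (by omega)]
    rw [show s ^ (a i - j) = s * s ^ (a i - (j+1)) from by
        rw [← pow_succ']; congr 1; omega,
      show s ^ (a i' - j') = s * s ^ (a i' - (j'+1)) from by
        rw [← pow_succ']; congr 1; omega,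
      pow_succ t j, pow_succ t j']
    ring

end Quadrics

section Key

variable (B : Module.Basis (Idx a) K (Fin (N + 1) → K))

lemma key (D : ScrollData K N n a) (hB : ∀ i j, B ⟨i, j⟩ = D.v i j) (ha : ∀ i, 1 ≤ a i)
    {p x : PS K N} (hpX : p ∉ D.carrier)
    (hT : ∀ f ∈ vanishing D.carrier, ∑ k, p.rep k * eval x.rep (pderiv k f) = 0)
    {s t : K} (hst : (s, t) ≠ (0, 0))
    (hx : x.rep ∈ Submodule.span K (Set.range fun i => D.w i s t)) :
    ∃ (c : Fin n → K) (lam : K), lam ≠ 0 ∧ x.rep = ∑ i, c i • D.w i s t ∧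
      ∀ (i : Fin n) (j : ℕ), j < a i →
        t * cc B p.rep i j - s * cc B p.rep i (j + 1) =
          lam * (c i * (s ^ (a i - 1 - j) * t ^ j)) := by
  obtain ⟨c, hc⟩ := (Submodule.mem_span_range_iff_exists_fun K).1 hx
  have hxcc : ∀ (i : Fin n) (j : ℕ) (_ : j ≤ a i),
      cc B x.rep i j = c i * (s ^ (a i - j) * t ^ j) :=
    fun i j hj => by rw [← hc, cc_sum_w B D hB c s t i j hj]
  have rel : ∀ (i i' : Fin n) (j j' : ℕ), j < a i → j' < a i' →
      (c i' * (s ^ (a i' - 1 - j') * t ^ j')) *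
          (t * cc B p.rep i j - s * cc B p.rep i (j + 1)) =
        (c i * (s ^ (a i - 1 - j) * t ^ j)) *
          (t * cc B p.rep i' j' - s * cc B p.rep i' (j' + 1)) := by
    intro i i' j j' hj hj'
    have star := hT _ (quad_vanish B D hB i i' j j' hj hj')
    rw [tang_eval] at star
    simp only [co_apply] at star
    rw [hxcc i j (by omega), hxcc i (j + 1) (by omega), hxcc i' j' (by omega),
      hxcc i' (j' + 1) (by omega)] at star
    rw [show s ^ (a i - j) = s * s ^ (a i - 1 - j) from by rw [← pow_succ']; congr 1; omega,
      show s ^ (a i' - j') = s * s ^ (a i' - 1 - j') from by rw [← pow_succ']; congr 1; omega,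
      show a i - (j + 1) = a i - 1 - j from by omega,
      show a i' - (j' + 1) = a i' - 1 - j' from by omega,
      pow_succ t j, pow_succ t j'] at star
    linear_combination star
  by_cases hall : ∀ (i : Fin n) (j : ℕ), j < a i →
      t * cc B p.rep i j - s * cc B p.rep i (j + 1) = 0
  · exfalso
    -- p lies on the ruling (s, t), contradiction
    have hmem : p.rep ∈ Submodule.span K (Set.range fun i => D.w i s t) := by
      by_cases hs : s = 0
      · have ht : t ≠ 0 := fun h0 => hst (by rw [hs, h0])
        have hz : ∀ (i : Fin n) (j : ℕ), j < a i → cc B p.rep i j = 0 := by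
          intro i j hj
          have := hall i j hj
          rw [hs] at this
          have h1 : t * cc B p.rep i j = 0 := by linear_combination this
          exact (mul_eq_zero.1 h1).resolve_left ht
        refine mem_ruling_of_cc B D hB (fun i => cc B p.rep i (a i) / t ^ (a i)) s t p.rep
          fun i j hj => ?_
        rcases Nat.lt_or_ge j (a i) with hlt | hge
        · rw [hz i j hlt, hs, zero_pow (by omega : a i - j ≠ 0)]
          ring
        · have hje : j = a i := by omega
          subst hje
          rw [hs, show a i - a i = 0 from by omega, pow_zero]
          field_simp
      · have pow_rel : ∀ (i : Fin n) (j : ℕ), j ≤ a i →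
            s ^ j * cc B p.rep i j = t ^ j * cc B p.rep i 0 := by
          intro i j
          induction j with
          | zero => simp
          | succ j ih =>
            intro hj
            have hd := hall i j (by omega)
            have ihj := ih (by omega)
            calc s ^ (j + 1) * cc B p.rep i (j + 1)
                = s ^ j * (s * cc B p.rep i (j + 1)) := by ring
              _ = s ^ j * (t * cc B p.rep i j) := by rw [show s * cc B p.rep i (j + 1) =
                    t * cc B p.rep i j from by linear_combination -hd]
              _ = t * (s ^ j * cc B p.rep i j) := by ring
              _ = t * (t ^ j * cc B p.rep i 0) := by rw [ihj]
              _ = t ^ (j + 1) * cc B p.rep i 0 := by ring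
        refine mem_ruling_of_cc B D hB (fun i => cc B p.rep i 0 / s ^ (a i)) s t p.rep
          fun i j hj => ?_
        rw [div_mul_eq_mul_div, eq_div_iff (pow_ne_zero _ hs),
          show s ^ (a i) = s ^ (a i - j) * s ^ j from by rw [← pow_add]; congr 1; omega]
        linear_combination (s ^ (a i - j)) * (pow_rel i j hj)
    have := mk_mem_carrier D p.rep_nonzero s t hst hmem
    rw [p.mk_rep] at this
    exact hpX this
  · push_neg at hall
    obtain ⟨i0, j0, hj0, hd0⟩ := hall
    have hcne : ∃ i1, c i1 ≠ 0 := by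
      by_contra hcz
      push_neg at hcz
      have : x.rep = 0 := by
        rw [← hc]
        refine Finset.sum_eq_zero fun i _ => ?_
        rw [hcz i, zero_smul]
      exact x.rep_nonzero this
    obtain ⟨i1, hi1⟩ := hcne
    have hj1m : ∃ j1 : ℕ, j1 < a i1 ∧ s ^ (a i1 - 1 - j1) * t ^ j1 ≠ 0 := by
      by_cases hs : s = 0
      · have ht : t ≠ 0 := fun h0 => hst (by rw [hs, h0])
        refine ⟨a i1 - 1, by have := ha i1; omega, ?_⟩
        rw [show a i1 - 1 - (a i1 - 1) = 0 from by omega, pow_zero, one_mul]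
        exact pow_ne_zero _ ht
      · refine ⟨0, by have := ha i1; omega, ?_⟩
        rw [pow_zero, mul_one]
        exact pow_ne_zero _ hs
    obtain ⟨j1, hj1, hm1⟩ := hj1m
    have hu1 : c i1 * (s ^ (a i1 - 1 - j1) * t ^ j1) ≠ 0 := mul_ne_zero hi1 hm1
    have hd1 : t * cc B p.rep i1 j1 - s * cc B p.rep i1 (j1 + 1) ≠ 0 := by
      intro h0
      have := rel i0 i1 j0 j1 hj0 hj1
      rw [h0, mul_zero] at this
      exact hd0 ((mul_eq_zero.1 this).resolve_left hu1)
    refine ⟨c, (t * cc B p.rep i1 j1 - s * cc B p.rep i1 (j1 + 1)) /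
      (c i1 * (s ^ (a i1 - 1 - j1) * t ^ j1)), div_ne_zero hd1 hu1, hc.symm, ?_⟩
    intro i j hj
    have := rel i i1 j j1 hj hj1
    rw [div_mul_eq_mul_div, eq_div_iff hu1]
    linear_combination this

end Key

lemma good_j (ha : ∀ i, 1 ≤ a i) {s t : K} (hst : (s, t) ≠ (0, 0)) (i : Fin n) :
    ∃ j : ℕ, j < a i ∧ s ^ (a i - 1 - j) * t ^ j ≠ 0 := by
  by_cases hs : s = 0
  · have ht : t ≠ 0 := fun h0 => hst (by rw [hs, h0])
    refine ⟨a i - 1, by have := ha i; omega, ?_⟩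
    rw [show a i - 1 - (a i - 1) = 0 from by omega, pow_zero, one_mul]
    exact pow_ne_zero _ ht
  · refine ⟨0, by have := ha i; omega, ?_⟩
    rw [pow_zero, mul_one]
    exact pow_ne_zero _ hs


end Aux

end SecantLoci

/-! ## Statement 3: the secant locus is never a double linear space -/

namespace SecantLoci

/-- If `X̃` is a smooth rational normal scroll of codimension at least 2,
`p ∈ Sec(X̃) \ X̃` and `Sec_p(X̃) = ℙ^{t-1}` with `t ≥ 3`, then the hyperquadric
`Σ_p(X̃) ⊆ ℙ^{t-1}` is not a double linear space; set-theoretically: its support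
is not a linear subspace of dimension `t - 2`. -/
theorem secant_locus_not_double_linear_space {K : Type*} [Field K] [IsAlgClosed K]
    {N n : ℕ} {a : Fin n → ℕ}
    (D : ScrollData K N n a) (ha : ∀ i, 1 ≤ a i)
    (htot : N + 1 = ∑ i, (a i + 1)) (hcodim : n + 2 ≤ N)
    (p : PS K N) (hp : p ∈ secVariety D.carrier \ D.carrier)
    (t : ℕ) (ht : 3 ≤ t)
    (hsec : IsLinearOfDim (secCone D.carrier p) (t - 1)) :
    ¬ ∃ E : Set (PS K N), IsLinearOfDim E (t - 2) ∧ secLocus D.carrier p = E := by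
  classical
  rintro ⟨E, ⟨W', hWr, hEW⟩, hloc⟩
  have hn : 0 < n := by
    by_contra h0
    push_neg at h0
    interval_cases n
    simp at htot
  have : Nonempty (Aux.Idx a) := ⟨⟨⟨0, hn⟩, ⟨0, by omega⟩⟩⟩
  have hcard : Fintype.card (Aux.Idx a) = Module.finrank K (Fin (N + 1) → K) := by
    rw [Module.finrank_fintype_fun_eq_card, Fintype.card_sigma]
    simp only [Fintype.card_fin]
    omega
  set B : Module.Basis (Aux.Idx a) K (Fin (N + 1) → K) :=
    basisOfLinearIndependentOfCardEqFinrank D.indep hcard with hBdef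
  have hB : ∀ i j, B ⟨i, j⟩ = D.v i j := fun i j => by
    rw [hBdef]
    exact congrFun (coe_basisOfLinearIndependentOfCardEqFinrank D.indep hcard) ⟨i, j⟩
  have hpX : p ∉ D.carrier := hp.2
  -- Step 1 : every point of the secant locus is a point of tangency from p
  have hEsec : ∀ x ∈ E, x ∈ D.carrier ∧
      (∀ f ∈ vanishing D.carrier, ∑ k, p.rep k * eval x.rep (pderiv k f) = 0) := by
    intro x hxE
    have hxsl : x ∈ secLocus D.carrier p := by rw [hloc]; exact hxE
    obtain ⟨hxX, hxsec⟩ := hxsl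
    refine ⟨hxX, ?_⟩
    have hxp : x ≠ p := fun h => hpX (h ▸ hxX)
    rcases hxsec with hx1 | hx2
    · exact absurd hx1 hxp
    · obtain ⟨L, hL, hxL⟩ := Set.mem_iUnion₂.1 hx2
      obtain ⟨⟨hLline, hLcase⟩, hpL⟩ := hL
      have hLsub : L ⊆ secCone D.carrier p := fun z hz =>
        Set.mem_union_right _ (Set.mem_biUnion ⟨⟨hLline, hLcase⟩, hpL⟩ hz)
      have hXL : ∀ y ∈ D.carrier ∩ L, y ∈ E := fun y hy => by
        rw [← hloc]; exact ⟨hy.1, hLsub hy.2⟩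
      obtain ⟨V, hVr, hLV⟩ := hLline
      have noTwo : ∀ y ∈ D.carrier ∩ L, ∀ z ∈ D.carrier ∩ L, y = z := by
        intro y hy z hz
        by_contra hyz
        have hyW : y.submodule ≤ W' := by
          have h1 := hXL y hy; rw [hEW] at h1; exact h1
        have hzW : z.submodule ≤ W' := by
          have h1 := hXL z hz; rw [hEW] at h1; exact h1
        have hyV : y.submodule ≤ V := by
          have h1 := hy.2; rw [hLV] at h1; exact h1
        have hzV : z.submodule ≤ V := by
          have h1 := hz.2; rw [hLV] at h1; exact h1
        have hsub : y.submodule ⊔ z.submodule ≤ V := sup_le hyV hzV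
        have hne : y.submodule ≠ z.submodule := by
          intro h1
          apply hyz
          have hzy : z.rep ∈ y.submodule := by
            rw [h1, Projectivization.submodule_eq]
            exact Submodule.mem_span_singleton_self _
          rw [Projectivization.submodule_eq, Submodule.mem_span_singleton] at hzy
          obtain ⟨k, hk⟩ := hzy
          have hkn : k ≠ 0 := by
            intro h0
            rw [h0, zero_smul] at hk
            exact z.rep_nonzero hk.symm
          rw [← y.mk_rep, ← z.mk_rep]
          exact ((Projectivization.mk_eq_mk_iff' K _ _ _ _).2 ⟨k, hk⟩).symm
        have hd2 : 2 ≤ Module.finrank K ↥(y.submodule ⊔ z.submodule) := by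
          by_contra hle
          push_neg at hle
          have h1 : y.submodule = y.submodule ⊔ z.submodule :=
            Submodule.eq_of_le_of_finrank_le le_sup_left
              (by rw [y.finrank_submodule]; omega)
          have h2 : z.submodule = y.submodule ⊔ z.submodule :=
            Submodule.eq_of_le_of_finrank_le le_sup_right
              (by rw [z.finrank_submodule]; omega)
          exact hne (h1.trans h2.symm)
        have hVeq : y.submodule ⊔ z.submodule = V :=
          Submodule.eq_of_le_of_finrank_le hsub (by rw [hVr]; omega)
        have hVW : V ≤ W' := hVeq ▸ sup_le hyW hzW
        have hpE : p ∈ E := by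
          rw [hEW]
          show p.submodule ≤ W'
          refine le_trans ?_ hVW
          have h1 := hpL; rw [hLV] at h1; exact h1
        have : p ∈ secLocus D.carrier p := by rw [hloc]; exact hpE
        exact hpX this.1
      rcases hLcase with ⟨y, hy, z, hz, hyz⟩ | ⟨q, hqXL, hLtan⟩
      · exact absurd (noTwo y hy z hz) hyz
      · have hqx : q = x := noTwo q hqXL x ⟨hxX, hxL⟩
        rw [hqx] at hLtan
        exact hLtan hpL
  have hmemE : ∀ (y : Fin (N + 1) → K) (hy : y ≠ 0), y ∈ W' → Projectivization.mk K y hy ∈ E := by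
    intro y hy hyW
    rw [hEW]
    show (Projectivization.mk K y hy).submodule ≤ W'
    rw [Projectivization.submodule_mk, Submodule.span_singleton_le_iff_mem]
    exact hyW
  have hrepW : ∀ x ∈ E, x.rep ∈ W' := by
    intro x hx
    rw [hEW] at hx
    have h1 : x.submodule ≤ W' := hx
    rw [Projectivization.submodule_eq, Submodule.span_singleton_le_iff_mem] at h1
    exact h1
  have hdata : ∀ x ∈ E, ∃ s t : K, (s, t) ≠ (0, 0) ∧
      ∃ (c : Fin n → K) (lam : K), lam ≠ 0 ∧ x.rep = ∑ i, c i • D.w i s t ∧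
        ∀ (i : Fin n) (j : ℕ), j < a i →
          t * Aux.cc B p.rep i j - s * Aux.cc B p.rep i (j + 1) =
            lam * (c i * (s ^ (a i - 1 - j) * t ^ j)) := by
    intro x hx
    obtain ⟨hxX, hT⟩ := hEsec x hx
    obtain ⟨s, t, hst, hspan⟩ := (Aux.mem_carrier_iff D x).1 hxX
    exact ⟨s, t, hst, Aux.key B D hB ha hpX hT hst hspan⟩
  -- two independent vectors of W'
  have hrk : 2 ≤ Module.finrank K W' := by rw [hWr]; omega
  obtain ⟨e1, he1W, he1n⟩ : ∃ y ∈ W', y ≠ 0 := by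
    by_contra h
    push_neg at h
    have hbot : W' = ⊥ := by
      rw [eq_bot_iff]
      intro y hy
      exact h y hy
    rw [hbot, finrank_bot] at hrk
    omega
  have hlt : Submodule.span K {e1} < W' := by
    refine lt_of_le_of_ne ((Submodule.span_singleton_le_iff_mem e1 W').2 he1W) ?_
    intro h
    rw [← h, finrank_span_singleton he1n] at hrk
    omega
  obtain ⟨e2, he2W, he2n⟩ := SetLike.exists_of_lt hlt
  have he2nz : e2 ≠ 0 := fun h => he2n (h ▸ Submodule.zero_mem _)
  set x0 : PS K N := Projectivization.mk K e1 he1n with hx0def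
  have hx0E : x0 ∈ E := hmemE e1 he1n he1W
  obtain ⟨s0, t0, hst0, c0, lam0, hlam0, hx0c, rel0⟩ := hdata x0 hx0E
  have hx0span : x0.rep ∈ Submodule.span K (Set.range fun i => D.w i s0 t0) := by
    rw [hx0c]
    exact Submodule.sum_mem _ fun i _ => Submodule.smul_mem _ _
      (Submodule.subset_span (Set.mem_range_self i))
  by_cases hall : ∀ x ∈ E, x.rep ∈ Submodule.span K (Set.range fun i => D.w i s0 t0)
  · -- CASE A : all of E lies in one ruling
    set x1 : PS K N := Projectivization.mk K e2 he2nz with hx1def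
    have hx1E : x1 ∈ E := hmemE e2 he2nz he2W
    obtain ⟨c1, lam1, hlam1, hx1c, rel1⟩ :=
      Aux.key B D hB ha hpX (hEsec x1 hx1E).2 hst0 (hall x1 hx1E)
    have hceq : ∀ i, lam1 * c1 i = lam0 * c0 i := by
      intro i
      obtain ⟨j, hj, hm⟩ := Aux.good_j ha hst0 i
      have h0 := rel0 i j hj
      have h1 := rel1 i j hj
      rw [h0] at h1
      have h2 : (lam0 * c0 i) * (s0 ^ (a i - 1 - j) * t0 ^ j) =
          (lam1 * c1 i) * (s0 ^ (a i - 1 - j) * t0 ^ j) := by linear_combination h1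
      exact (mul_right_cancel₀ hm h2).symm
    have hx1x0 : lam1 • x1.rep = lam0 • x0.rep := by
      rw [hx1c, hx0c, Finset.smul_sum, Finset.smul_sum]
      refine Finset.sum_congr rfl fun i _ => ?_
      rw [smul_smul, smul_smul, hceq i]
    obtain ⟨u0, hu0u⟩ := exists_smul_eq_mk_rep K e1 he1n
    have hu0 : (u0 : K) • e1 = x0.rep := by rw [← Units.smul_def, hu0u, hx0def]
    obtain ⟨u1, hu1u⟩ := exists_smul_eq_mk_rep K e2 he2nz
    have hu1 : (u1 : K) • e2 = x1.rep := by rw [← Units.smul_def, hu1u, hx1def]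
    apply he2n
    rw [Submodule.mem_span_singleton]
    refine ⟨(u1 : K)⁻¹ * (lam1⁻¹ * (lam0 * (u0 : K))), ?_⟩
    have hx1rep : x1.rep = (lam1⁻¹ * (lam0 * (u0 : K))) • e1 := by
      have h1 : lam1 • x1.rep = (lam0 * (u0 : K)) • e1 := by
        rw [hx1x0, ← hu0, smul_smul]
      calc x1.rep = lam1⁻¹ • (lam1 • x1.rep) := by
            rw [smul_smul, inv_mul_cancel₀ hlam1, one_smul]
        _ = lam1⁻¹ • ((lam0 * (u0 : K)) • e1) := by rw [h1]
        _ = _ := by rw [smul_smul]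
    have he2rep : e2 = (u1 : K)⁻¹ • x1.rep := by
      rw [← hu1, smul_smul, inv_mul_cancel₀ (Units.ne_zero u1), one_smul]
    rw [he2rep, hx1rep, smul_smul]
  · -- CASE B
    push_neg at hall
    obtain ⟨x1, hx1E, hx1n⟩ := hall
    obtain ⟨s1, t1, hst1, c1, lam1, hlam1, hx1c, rel1⟩ := hdata x1 hx1E
    have hx1span : x1.rep ∈ Submodule.span K (Set.range fun i => D.w i s1 t1) := by
      rw [hx1c]
      exact Submodule.sum_mem _ fun i _ => Submodule.smul_mem _ _
        (Submodule.subset_span (Set.mem_range_self i))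
    have cross01 : s0 * t1 - t0 * s1 ≠ 0 := by
      intro h0
      rw [Aux.w_proportional D s0 t0 s1 t1 h0 hst0 hst1] at hx1span
      exact hx1n hx1span
    have hy2n : x0.rep + x1.rep ≠ 0 := by
      intro h0
      apply hx1n
      rw [show x1.rep = -x0.rep from by linear_combination (norm := module) h0]
      exact Submodule.neg_mem _ hx0span
    set x2 : PS K N := Projectivization.mk K (x0.rep + x1.rep) hy2n with hx2def
    have hx2E : x2 ∈ E := hmemE _ hy2n (W'.add_mem (hrepW x0 hx0E) (hrepW x1 hx1E))
    obtain ⟨s2, t2, hst2, c2, lam2, hlam2, hx2c, rel2⟩ := hdata x2 hx2E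
    have hx2span : x2.rep ∈ Submodule.span K (Set.range fun i => D.w i s2 t2) := by
      rw [hx2c]
      exact Submodule.sum_mem _ fun i _ => Submodule.smul_mem _ _
        (Submodule.subset_span (Set.mem_range_self i))
    obtain ⟨u2, hu2u⟩ := exists_smul_eq_mk_rep K _ hy2n
    have hu2 : (u2 : K) • (x0.rep + x1.rep) = x2.rep := by
      rw [← Units.smul_def, hu2u, hx2def]
    have cross02 : s0 * t2 - t0 * s2 ≠ 0 := by
      intro h0
      rw [Aux.w_proportional D s0 t0 s2 t2 h0 hst0 hst2] at hx2span
      apply hx1n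
      rw [show x1.rep = (u2 : K)⁻¹ • x2.rep - x0.rep from by
        rw [← hu2, smul_smul, inv_mul_cancel₀ (Units.ne_zero u2), one_smul]
        module]
      exact Submodule.sub_mem _ (Submodule.smul_mem _ _ hx2span) hx0span
    have cross12 : s1 * t2 - t1 * s2 ≠ 0 := by
      intro h0
      rw [Aux.w_proportional D s1 t1 s2 t2 h0 hst1 hst2] at hx2span
      have hx0in1 : x0.rep ∈ Submodule.span K (Set.range fun i => D.w i s1 t1) := by
        rw [show x0.rep = (u2 : K)⁻¹ • x2.rep - x1.rep from by
          rw [← hu2, smul_smul, inv_mul_cancel₀ (Units.ne_zero u2), one_smul]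
          module]
        exact Submodule.sub_mem _ (Submodule.smul_mem _ _ hx2span) hx1span
      exact x0.rep_nonzero (Aux.ruling_disjoint B D hB ha cross01 hx0span hx0in1)
    -- zero coordinates of p
    have mkQ : ∀ (s t lam : K) (c : Fin n → K),
        (∀ (i : Fin n) (j : ℕ), j < a i →
          t * Aux.cc B p.rep i j - s * Aux.cc B p.rep i (j + 1) =
            lam * (c i * (s ^ (a i - 1 - j) * t ^ j))) →
        ∀ (i : Fin n) (j : ℕ), j + 2 ≤ a i →
          Aux.cc B p.rep i j * t ^ 2 -
            (Aux.cc B p.rep i (j + 1) + Aux.cc B p.rep i (j + 1)) * (s * t) +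
            Aux.cc B p.rep i (j + 2) * s ^ 2 = 0 := by
      intro s t lam c hrel i j hj
      have h1 := hrel i j (by omega)
      have h2 := hrel i (j + 1) (by omega)
      rw [show a i - 1 - (j + 1) = a i - 2 - j from by omega, pow_succ t j] at h2
      rw [show s ^ (a i - 1 - j) = s * s ^ (a i - 2 - j) from by
        rw [← pow_succ']; congr 1; omega] at h1
      linear_combination t * h1 - s * h2
    have hdetne : ((s0 * t1 - t0 * s1) * ((s0 * t2 - t0 * s2) * (s1 * t2 - t1 * s2))) ≠ 0 :=
      mul_ne_zero cross01 (mul_ne_zero cross02 cross12)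
    have hz0 : ∀ (i : Fin n) (j : ℕ), j + 2 ≤ a i → Aux.cc B p.rep i j = 0 ∧
        (Aux.cc B p.rep i (j + 1) + Aux.cc B p.rep i (j + 1)) = 0 ∧
        Aux.cc B p.rep i (j + 2) = 0 := by
      intro i j hj
      have q0 := mkQ s0 t0 lam0 c0 rel0 i j hj
      have q1 := mkQ s1 t1 lam1 c1 rel1 i j hj
      have q2 := mkQ s2 t2 lam2 c2 rel2 i j hj
      refine ⟨?_, ?_, ?_⟩
      · have hA : ((s0 * t1 - t0 * s1) * ((s0 * t2 - t0 * s2) * (s1 * t2 - t1 * s2))) *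
            Aux.cc B p.rep i j = 0 := by
          linear_combination (s1 * s2 * (s1 * t2 - t1 * s2)) * q0
            - (s0 * s2 * (s0 * t2 - t0 * s2)) * q1 + (s0 * s1 * (s0 * t1 - t0 * s1)) * q2
        exact (mul_eq_zero.1 hA).resolve_left hdetne
      · have hA : ((s0 * t1 - t0 * s1) * ((s0 * t2 - t0 * s2) * (s1 * t2 - t1 * s2))) *
            (Aux.cc B p.rep i (j + 1) + Aux.cc B p.rep i (j + 1)) = 0 := by
          linear_combination ((s1 * t2 - t1 * s2) * (t1 * s2 + s1 * t2)) * q0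
            - ((s0 * t2 - t0 * s2) * (t0 * s2 + s0 * t2)) * q1
            + ((s0 * t1 - t0 * s1) * (t0 * s1 + s0 * t1)) * q2
        exact (mul_eq_zero.1 hA).resolve_left hdetne
      · have hA : ((s0 * t1 - t0 * s1) * ((s0 * t2 - t0 * s2) * (s1 * t2 - t1 * s2))) *
            Aux.cc B p.rep i (j + 2) = 0 := by
          linear_combination (t1 * t2 * (s1 * t2 - t1 * s2)) * q0
            - (t0 * t2 * (s0 * t2 - t0 * s2)) * q1 + (t0 * t1 * (s0 * t1 - t0 * s1)) * q2
        exact (mul_eq_zero.1 hA).resolve_left hdetne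
    have hza : ∀ (i : Fin n), 3 ≤ a i → ∀ j : ℕ, j ≤ a i → Aux.cc B p.rep i j = 0 := by
      intro i h3 j hj
      rcases Nat.lt_or_ge j 2 with h | h
      · exact (hz0 i j (by omega)).1
      · have := (hz0 i (j - 2) (by omega)).2.2
        rwa [show j - 2 + 2 = j from by omega] at this
    have hzb : ∀ i, a i = 2 → Aux.cc B p.rep i 0 = 0 ∧ Aux.cc B p.rep i 2 = 0 ∧
        Aux.cc B p.rep i 1 + Aux.cc B p.rep i 1 = 0 := fun i h2 =>
      ⟨(hz0 i 0 (by omega)).1, (hz0 i 0 (by omega)).2.2, (hz0 i 0 (by omega)).2.1⟩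
    -- the three distinguished vectors
    set uC : Aux.Idx a → K := fun σ =>
      if a σ.1 = 1 then (if (σ.2 : ℕ) = 0 then -(Aux.cc B p.rep σ.1 1) else 0)
      else if a σ.1 = 2 then (if (σ.2 : ℕ) = 0 then Aux.cc B p.rep σ.1 1 else 0) else 0
      with huCdef
    set vC : Aux.Idx a → K := fun σ =>
      if a σ.1 = 1 then (if (σ.2 : ℕ) = 0 then Aux.cc B p.rep σ.1 0 else
        if (σ.2 : ℕ) = 1 then -(Aux.cc B p.rep σ.1 1) else 0)
      else if a σ.1 = 2 then (if (σ.2 : ℕ) = 1 then Aux.cc B p.rep σ.1 1 else 0) else 0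
      with hvCdef
    set wC : Aux.Idx a → K := fun σ =>
      if a σ.1 = 1 then (if (σ.2 : ℕ) = 1 then Aux.cc B p.rep σ.1 0 else 0)
      else if a σ.1 = 2 then (if (σ.2 : ℕ) = 2 then Aux.cc B p.rep σ.1 1 else 0) else 0
      with hwCdef
    set u : Fin (N + 1) → K := ∑ σ, uC σ • B σ with hudef
    set v : Fin (N + 1) → K := ∑ σ, vC σ • B σ with hvdef
    set w : Fin (N + 1) → K := ∑ σ, wC σ • B σ with hwdef
    have hform : ∀ (s t lam : K) (c : Fin n → K) (x : PS K N), (s, t) ≠ (0, 0) → lam ≠ 0 →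
        x.rep = ∑ i, c i • D.w i s t →
        (∀ (i : Fin n) (j : ℕ), j < a i →
          t * Aux.cc B p.rep i j - s * Aux.cc B p.rep i (j + 1) =
            lam * (c i * (s ^ (a i - 1 - j) * t ^ j))) →
        lam • x.rep = s ^ 2 • u + (s * t) • v + t ^ 2 • w := by
      intro s t lam c x hst hlam hxc hrel
      have hc3 : ∀ i, 3 ≤ a i → c i = 0 := by
        intro i h3
        obtain ⟨j, hj, hm⟩ := Aux.good_j ha hst i
        have h := hrel i j hj
        rw [hza i h3 j (by omega), hza i h3 (j + 1) (by omega)] at h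
        have h0 : lam * (c i * (s ^ (a i - 1 - j) * t ^ j)) = 0 := by linear_combination -h
        rcases mul_eq_zero.1 h0 with h' | h'
        · exact absurd h' hlam
        · exact (mul_eq_zero.1 h').resolve_right hm
      have hc2 : ∀ i, a i = 2 → lam * c i = Aux.cc B p.rep i 1 := by
        intro i h2
        obtain ⟨hb0, hb2, hb1⟩ := hzb i h2
        have r0 := hrel i 0 (by omega)
        have r1 := hrel i 1 (by omega)
        rw [hb0, show a i - 1 - 0 = 1 from by omega] at r0
        rw [hb2, show a i - 1 - 1 = 0 from by omega] at r1
        -- r0 : t * 0 - s * pc i 1 = lam * (c i * (s ^ 1 * t ^ 0))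
        -- r1 : t * pc i 1 - s * 0 = lam * (c i * (s ^ 0 * t ^ 1))
        by_cases hts : t = 0
        · have hs : s ≠ 0 := fun h0 => hst (by rw [h0, hts])
          have h0 : s * (lam * c i + Aux.cc B p.rep i 1) = 0 := by
            rw [hts] at r0
            linear_combination -r0
          have h1 : lam * c i + Aux.cc B p.rep i 1 = 0 := (mul_eq_zero.1 h0).resolve_left hs
          linear_combination h1 - hb1
        · have h0 : t * (lam * c i - Aux.cc B p.rep i 1) = 0 := by linear_combination -r1
          have h1 := (mul_eq_zero.1 h0).resolve_left hts
          linear_combination h1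
      have hc1 : ∀ i, a i = 1 →
          lam * c i = t * Aux.cc B p.rep i 0 - s * Aux.cc B p.rep i 1 := by
        intro i h1
        have r0 := hrel i 0 (by omega)
        rw [show a i - 1 - 0 = 0 from by omega] at r0
        linear_combination -r0
      refine Aux.eq_of_cc B fun i j hj => ?_
      rw [Aux.cc_smul, hxc, Aux.cc_sum_w B D hB c s t i j hj]
      rw [Aux.cc_add, Aux.cc_add, Aux.cc_smul, Aux.cc_smul, Aux.cc_smul, hudef, hvdef, hwdef,
        Aux.cc_sumCoef B uC i j hj, Aux.cc_sumCoef B vC i j hj, Aux.cc_sumCoef B wC i j hj]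
      simp only [huCdef, hvCdef, hwCdef]
      by_cases h1 : a i = 1
      · rw [if_pos h1, if_pos h1, if_pos h1]
        have hj1 : j ≤ 1 := by omega
        interval_cases j
        · norm_num
          rw [h1, pow_one]
          linear_combination s * hc1 i h1
        · norm_num
          rw [show a i - 1 = 0 from by rw [h1], pow_zero]
          linear_combination t * hc1 i h1
      · by_cases h2 : a i = 2
        · rw [if_neg h1, if_neg h1, if_neg h1, if_pos h2, if_pos h2, if_pos h2]
          have hj2 : j ≤ 2 := by omega
          interval_cases j
          · norm_num
            rw [h2]
            linear_combination (s ^ 2) * hc2 i h2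
          · norm_num
            rw [show a i - 1 = 1 from by rw [h2], pow_one]
            linear_combination (s * t) * hc2 i h2
          · norm_num
            rw [show a i - 2 = 0 from by rw [h2], pow_zero]
            linear_combination (t ^ 2) * hc2 i h2
        · rw [if_neg h1, if_neg h1, if_neg h1, if_neg h2, if_neg h2, if_neg h2]
          rw [hc3 i (by have := ha i; omega)]
          ring
    have H0 := hform s0 t0 lam0 c0 x0 hst0 hlam0 hx0c rel0
    have H1 := hform s1 t1 lam1 c1 x1 hst1 hlam1 hx1c rel1
    have H2 := hform s2 t2 lam2 c2 x2 hst2 hlam2 hx2c rel2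
    have hvW' : v ∈ W' := by
      have hx0W := hrepW x0 hx0E
      have hx1W := hrepW x1 hx1E
      have hx2W := hrepW x2 hx2E
      have hcombv : ((s0 * t1 - t0 * s1) * ((s0 * t2 - t0 * s2) * (s1 * t2 - t1 * s2))) • v =
          (-((s1 * t2 - t1 * s2) * (t1 * s2 + s1 * t2))) • (lam0 • x0.rep)
          + ((s0 * t2 - t0 * s2) * (t0 * s2 + s0 * t2)) • (lam1 • x1.rep)
          + (-((s0 * t1 - t0 * s1) * (t0 * s1 + s0 * t1))) • (lam2 • x2.rep) := by
        rw [H0, H1, H2]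
        module
      have hmem : ((s0 * t1 - t0 * s1) * ((s0 * t2 - t0 * s2) * (s1 * t2 - t1 * s2))) • v ∈ W' := by
        rw [hcombv]
        exact Submodule.add_mem _ (Submodule.add_mem _
          (Submodule.smul_mem _ _ (Submodule.smul_mem _ _ hx0W))
          (Submodule.smul_mem _ _ (Submodule.smul_mem _ _ hx1W)))
          (Submodule.smul_mem _ _ (Submodule.smul_mem _ _ hx2W))
      have h2 := Submodule.smul_mem W'
        ((s0 * t1 - t0 * s1) * ((s0 * t2 - t0 * s2) * (s1 * t2 - t1 * s2)))⁻¹ hmem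
      rwa [smul_smul, inv_mul_cancel₀ hdetne, one_smul] at h2
    by_cases hdep : ∃ α β γ : K, ¬(α = 0 ∧ β = 0 ∧ γ = 0) ∧
        α • u + β • v + γ • w = (0 : Fin (N + 1) → K)
    · obtain ⟨α, β, γ, hnz, hcomb⟩ := hdep
      have hR : ∀ (i : Fin n) (j : ℕ) (hj : j ≤ a i),
          α * uC ⟨i, ⟨j, by omega⟩⟩ + β * vC ⟨i, ⟨j, by omega⟩⟩ +
            γ * wC ⟨i, ⟨j, by omega⟩⟩ = 0 := by
        intro i j hj
        have h1 : Aux.cc B (α • u + β • v + γ • w) i j = 0 := by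
          rw [hcomb, Aux.cc_zero]
        rw [Aux.cc_add, Aux.cc_add, Aux.cc_smul, Aux.cc_smul, Aux.cc_smul, hudef, hvdef, hwdef,
          Aux.cc_sumCoef B uC i j hj, Aux.cc_sumCoef B vC i j hj,
          Aux.cc_sumCoef B wC i j hj] at h1
        exact h1
      have R10 : ∀ i, a i = 1 →
          β * Aux.cc B p.rep i 0 - α * Aux.cc B p.rep i 1 = 0 := by
        intro i h1
        have h := hR i 0 (by omega)
        simp only [huCdef, hvCdef, hwCdef] at h
        rw [if_pos h1, if_pos h1, if_pos h1] at h
        norm_num at h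
        linear_combination h
      have R11 : ∀ i, a i = 1 →
          γ * Aux.cc B p.rep i 0 - β * Aux.cc B p.rep i 1 = 0 := by
        intro i h1
        have h := hR i 1 (by omega)
        simp only [huCdef, hvCdef, hwCdef] at h
        rw [if_pos h1, if_pos h1, if_pos h1] at h
        norm_num at h
        linear_combination h
      have R20 : ∀ i, a i = 2 → α * Aux.cc B p.rep i 1 = 0 := by
        intro i h2
        have h := hR i 0 (by omega)
        simp only [huCdef, hvCdef, hwCdef] at h
        rw [if_neg (by omega : ¬ a i = 1), if_neg (by omega : ¬ a i = 1),
          if_neg (by omega : ¬ a i = 1), if_pos h2, if_pos h2, if_pos h2] at h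
        norm_num at h
        rcases h with h | h
        · rw [h]; ring
        · rw [h]; ring
      have R21 : ∀ i, a i = 2 → β * Aux.cc B p.rep i 1 = 0 := by
        intro i h2
        have h := hR i 1 (by omega)
        simp only [huCdef, hvCdef, hwCdef] at h
        rw [if_neg (by omega : ¬ a i = 1), if_neg (by omega : ¬ a i = 1),
          if_neg (by omega : ¬ a i = 1), if_pos h2, if_pos h2, if_pos h2] at h
        norm_num at h
        rcases h with h | h
        · rw [h]; ring
        · rw [h]; ring
      have R22 : ∀ i, a i = 2 → γ * Aux.cc B p.rep i 1 = 0 := by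
        intro i h2
        have h := hR i 2 (by omega)
        simp only [huCdef, hvCdef, hwCdef] at h
        rw [if_neg (by omega : ¬ a i = 1), if_neg (by omega : ¬ a i = 1),
          if_neg (by omega : ¬ a i = 1), if_pos h2, if_pos h2, if_pos h2] at h
        norm_num at h
        rcases h with h | h
        · rw [h]; ring
        · rw [h]; ring
      by_cases hα : α = 0
      · by_cases hβ : β = 0
        · -- γ ≠ 0 : p lies on the ruling (0, 1)
          have hγ : γ ≠ 0 := fun h => hnz ⟨hα, hβ, h⟩
          apply hpX
          have hmem : p.rep ∈ Submodule.span K (Set.range fun i => D.w i 0 1) := by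
            refine Aux.mem_ruling_of_cc B D hB
              (fun i => if a i = 1 then Aux.cc B p.rep i 1 else 0) 0 1 p.rep fun i j hj => ?_
            by_cases h1 : a i = 1
            · rw [if_pos h1]
              have hj1 : j ≤ 1 := by omega
              interval_cases j
              · have h := R11 i h1
                rw [hβ] at h
                have h0 : γ * Aux.cc B p.rep i 0 = 0 := by linear_combination h
                rw [(mul_eq_zero.1 h0).resolve_left hγ,
                  show a i - 0 = 1 from by rw [h1], pow_one]
                ring
              · rw [show a i - 1 = 0 from by rw [h1], pow_zero, one_pow]
                ring
            · rw [if_neg h1]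
              by_cases h2 : a i = 2
              · have hz := hzb i h2
                have hj2 : j ≤ 2 := by omega
                interval_cases j
                · rw [hz.1]; ring
                · rw [(mul_eq_zero.1 (R22 i h2)).resolve_left hγ]; ring
                · rw [hz.2.1]; ring
              · rw [hza i (by have := ha i; omega) j hj]; ring
          have h3 := Aux.mk_mem_carrier D p.rep_nonzero 0 1 (by simp) hmem
          rwa [p.mk_rep] at h3
        · -- α = 0, β ≠ 0 : p.rep = 0, contradiction
          exfalso
          apply p.rep_nonzero
          refine Aux.eq_of_cc B fun i j hj => ?_
          rw [Aux.cc_zero]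
          by_cases h1 : a i = 1
          · have hp0 : Aux.cc B p.rep i 0 = 0 := by
              have h := R10 i h1
              rw [hα] at h
              have h0 : β * Aux.cc B p.rep i 0 = 0 := by linear_combination h
              exact (mul_eq_zero.1 h0).resolve_left hβ
            have hp1 : Aux.cc B p.rep i 1 = 0 := by
              have h := R11 i h1
              rw [hp0] at h
              have h0 : β * Aux.cc B p.rep i 1 = 0 := by linear_combination -h
              exact (mul_eq_zero.1 h0).resolve_left hβ
            have hj1 : j ≤ 1 := by omega
            interval_cases j
            · exact hp0
            · exact hp1
          · by_cases h2 : a i = 2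
            · have hz := hzb i h2
              have hj2 : j ≤ 2 := by omega
              interval_cases j
              · exact hz.1
              · exact (mul_eq_zero.1 (R21 i h2)).resolve_left hβ
              · exact hz.2.1
            · exact hza i (by have := ha i; omega) j hj
      · -- α ≠ 0 : p lies on the ruling (α, β)
        apply hpX
        have hmem : p.rep ∈ Submodule.span K (Set.range fun i => D.w i α β) := by
          refine Aux.mem_ruling_of_cc B D hB
            (fun i => if a i = 1 then Aux.cc B p.rep i 0 / α else 0) α β p.rep fun i j hj => ?_
          by_cases h1 : a i = 1
          · rw [if_pos h1]
            have hj1 : j ≤ 1 := by omega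
            interval_cases j
            · rw [show a i - 0 = 1 from by rw [h1], pow_one, pow_zero]
              field_simp
            · rw [show a i - 1 = 0 from by rw [h1], pow_zero, pow_one]
              rw [div_mul_eq_mul_div, one_mul, eq_div_iff hα]
              linear_combination -(R10 i h1)
          · rw [if_neg h1]
            by_cases h2 : a i = 2
            · have hz := hzb i h2
              have hj2 : j ≤ 2 := by omega
              interval_cases j
              · rw [hz.1]; ring
              · rw [(mul_eq_zero.1 (R20 i h2)).resolve_left hα]; ring
              · rw [hz.2.1]; ring
            · rw [hza i (by have := ha i; omega) j hj]; ring
        have h3 := Aux.mk_mem_carrier D p.rep_nonzero α β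
          (fun h => hα (by simpa using congrArg Prod.fst h)) hmem
        rwa [p.mk_rep] at h3
    · have hvne : v ≠ 0 := by
        intro h0
        exact hdep ⟨0, 1, 0, by simp, by rw [h0]; simp⟩
      set xv : PS K N := Projectivization.mk K v hvne with hxvdef
      have hxvE : xv ∈ E := hmemE v hvne hvW'
      obtain ⟨sv, tv, hstv, cv, lamv, hlamv, hxvc, relv⟩ := hdata xv hxvE
      have Hv := hform sv tv lamv cv xv hstv hlamv hxvc relv
      obtain ⟨uv, huvu⟩ := exists_smul_eq_mk_rep K v hvne
      have huv : (uv : K) • v = xv.rep := by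
        rw [← Units.smul_def, huvu, hxvdef]
      have hcomb : sv ^ 2 • u + (sv * tv - lamv * (uv : K)) • v + tv ^ 2 • w =
          (0 : Fin (N + 1) → K) := by
        have h1 : lamv • xv.rep = (lamv * (uv : K)) • v := by rw [← huv, smul_smul]
        rw [h1] at Hv
        linear_combination (norm := module) -Hv
      have hall0 : sv ^ 2 = 0 ∧ (sv * tv - lamv * (uv : K)) = 0 ∧ tv ^ 2 = 0 := by
        by_contra hno
        exact hdep ⟨_, _, _, hno, hcomb⟩
      have hsv : sv = 0 := by
        have := hall0.1
        exact pow_eq_zero_iff (two_ne_zero) |>.1 this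
      have htv : tv = 0 := pow_eq_zero_iff (two_ne_zero) |>.1 hall0.2.2
      exact hstv (by rw [hsv, htv])

end SecantLoci
end
end
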